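/- arXiv:1207.2628 — 7 statements merged into one kernel-verified Lean document; each statement's English description precedes it below -/
import Mathlib

section
/- Let d ≥ 2 be an integer and p a prime with d/2 < p < d. Let α ∈ K satisfy α^{d−1} = d^d / ((−p)^p (d−p)^{d−p}) and set f(z) = z^{d−p} (z − α)^p. Then f ∈ P_d, f is post-critically bounded (indeed every critical point of f has finite forward orbit), and α is a critical point of f with |α| = p^{p/(d−1)}. -/
open Polynomial

/-- Let `d ≥ 2` and `p` prime with `d/2 < p < d`. Let
`α^(d-1) = d^d / ((-p)^p (d-p)^(d-p))` and `f(z) = z^(d-p) (z-α)^p`. Then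
`f ∈ P_d`, `f` is PCB (indeed every critical point has finite forward orbit),
and `α` is a critical point of `f` with `|α| = p^(p/(d-1))`. -/
theorem stmt_1 (K : Type*) [NormedField K] [IsAlgClosed K] [CompleteSpace K]
    (hna : IsNonarchimedean (fun x : K => ‖x‖))
    (p : ℕ) (hp : p.Prime)
    (hext : ∀ q : ℚ, ‖(q : K)‖ = (padicNorm p q : ℝ))
    (d : ℕ) (hd : 2 ≤ d) (hdp : d < 2 * p) (hpd : p < d)
    (α : K)
    (hα : α ^ (d - 1) = (d : K) ^ d / ((-(p : K)) ^ p * ((d : K) - (p : K)) ^ (d - p)))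
    (f : K[X]) (hf : f = X ^ (d - p) * (X - C α) ^ p) :
    (f.Monic ∧ f.natDegree = d ∧ f.eval 0 = 0) ∧
    (∀ c : K, f.derivative.eval c = 0 →
      (Set.range fun n : ℕ => (fun z => f.eval z)^[n] c).Finite) ∧
    (∀ c : K, f.derivative.eval c = 0 →
      ∃ B : ℝ, ∀ n : ℕ, ‖(fun z => f.eval z)^[n] c‖ ≤ B) ∧
    f.derivative.eval α = 0 ∧
    ‖α‖ = (p : ℝ) ^ ((p : ℝ) / ((d : ℝ) - 1)) := by
  haveI : Fact p.Prime := ⟨hp⟩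
  have hp2 : 2 ≤ p := hp.two_le
  have hmd : d - p + p = d := by omega
  -- norms of naturals
  have hnat : ∀ n : ℕ, ‖(n : K)‖ = ((padicNorm p n : ℚ) : ℝ) := by
    intro n
    have := hext (n : ℚ)
    simpa using this
  have hne : ∀ n : ℕ, n ≠ 0 → (n : K) ≠ 0 := by
    intro n hn h
    have h1 := hnat n
    rw [h, norm_zero] at h1
    have : padicNorm p (n : ℚ) = 0 := by exact_mod_cast h1.symm
    have := padicNorm.zero_of_padicNorm_eq_zero this
    exact hn (by exact_mod_cast this)
  have hdK : (d : K) ≠ 0 := hne d (by omega)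
  have hpK : (p : K) ≠ 0 := hne p (by omega)
  have hdpK : ((d : K) - (p : K)) ≠ 0 := by
    have h := hne (d - p) (by omega)
    rwa [Nat.cast_sub hpd.le] at h
  have hRHSne : (d : K) ^ d / ((-(p : K)) ^ p * ((d : K) - (p : K)) ^ (d - p)) ≠ 0 := by
    apply div_ne_zero (pow_ne_zero _ hdK)
    exact mul_ne_zero (pow_ne_zero _ (neg_ne_zero.mpr hpK)) (pow_ne_zero _ hdpK)
  have hαne : α ≠ 0 := by
    intro h
    rw [h, zero_pow (by omega : d - 1 ≠ 0)] at hα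
    exact hRHSne hα.symm
  have hα2 : α ^ (d - 1) * ((-(p : K)) ^ p * ((d : K) - (p : K)) ^ (d - p)) = (d : K) ^ d := by
    rw [hα, div_mul_cancel₀]
    exact mul_ne_zero (pow_ne_zero _ (neg_ne_zero.mpr hpK)) (pow_ne_zero _ hdpK)
  set γ : K := ((d : K) - (p : K)) * α / (d : K) with hγdef
  have hev : ∀ z : K, f.eval z = z ^ (d - p) * (z - α) ^ p := by
    intro z; simp [hf]
  have h0 : f.eval 0 = 0 := by
    rw [hev]; rw [zero_pow (by omega : d - p ≠ 0)]; ring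
  have hA : f.eval α = 0 := by
    rw [hev, sub_self, zero_pow (by omega : p ≠ 0)]; ring
  have key : (((d : K) - (p : K)) * α) ^ (d - p) * ((-(p : K)) * α) ^ p = α * (d : K) ^ d := by
    have e1 : α ^ (d - p) * α ^ p = α ^ (d - 1) * α := by
      rw [← pow_add, ← pow_succ]
      congr 1
      omega
    calc (((d : K) - (p : K)) * α) ^ (d - p) * ((-(p : K)) * α) ^ p
        = (α ^ (d - p) * α ^ p) * (((d : K) - (p : K)) ^ (d - p) * (-(p : K)) ^ p) := by
          rw [mul_pow, mul_pow]; ring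
      _ = (α ^ (d - 1) * α) * (((d : K) - (p : K)) ^ (d - p) * (-(p : K)) ^ p) := by rw [e1]
      _ = (α ^ (d - 1) * ((-(p : K)) ^ p * ((d : K) - (p : K)) ^ (d - p))) * α := by ring
      _ = α * (d : K) ^ d := by rw [hα2]; ring
  have hG : f.eval γ = α := by
    have h1 : γ - α = (-(p : K)) * α / (d : K) := by
      rw [hγdef]
      field_simp
      ring
    rw [hev, h1, hγdef, div_pow, div_pow, div_mul_div_comm, ← pow_add, hmd, key]
    field_simp
  have hder : ∀ c : K, f.derivative.eval c =
      c ^ (d - p - 1) * (c - α) ^ (p - 1) * ((d : K) * c - ((d : K) - (p : K)) * α) := by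
    intro c
    have e2 : c ^ (d - p) = c ^ (d - p - 1) * c := by
      rw [← pow_succ]; congr 1; omega
    have e3 : (c - α) ^ p = (c - α) ^ (p - 1) * (c - α) := by
      rw [← pow_succ]; congr 1; omega
    rw [hf]
    simp only [derivative_mul, derivative_pow, derivative_X, derivative_sub, derivative_C,
      sub_zero, mul_one, eval_add, eval_mul, eval_pow, eval_sub, eval_C, eval_X, eval_natCast]
    rw [e2, e3, Nat.cast_sub hpd.le]
    ring
  have hcritα : f.derivative.eval α = 0 := by
    rw [hder, sub_self, zero_pow (by omega : p - 1 ≠ 0)]; ring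
  -- classify critical points
  have hcrit : ∀ c : K, f.derivative.eval c = 0 → c = 0 ∨ c = α ∨ c = γ := by
    intro c hc
    rw [hder] at hc
    rcases mul_eq_zero.mp hc with h | h
    · rcases mul_eq_zero.mp h with h | h
      · rcases Nat.eq_zero_or_pos (d - p - 1) with h0 | h0
        · rw [h0, pow_zero] at h; exact absurd h one_ne_zero
        · left; exact pow_eq_zero_iff (by omega) |>.mp h
      · right; left
        have := pow_eq_zero_iff (by omega : p - 1 ≠ 0) |>.mp h
        exact sub_eq_zero.mp this
    · right; right
      rw [hγdef, eq_div_iff hdK]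
      linear_combination h
  -- forward invariance of S = {0, α, γ}
  have hS : ∀ x ∈ ({0, α, γ} : Set K), f.eval x ∈ ({0, α, γ} : Set K) := by
    intro x hx
    rcases hx with rfl | rfl | rfl
    · rw [h0]; exact Set.mem_insert _ _
    · rw [hA]; exact Set.mem_insert _ _
    · rw [hG]; exact Set.mem_insert_of_mem _ (Set.mem_insert _ _)
  have horbit : ∀ x ∈ ({0, α, γ} : Set K), ∀ n : ℕ,
      (fun z => f.eval z)^[n] x ∈ ({0, α, γ} : Set K) := by
    intro x hx n
    induction n with
    | zero => simpa using hx
    | succ n ih =>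
      rw [Function.iterate_succ_apply']
      exact hS _ ih
  have hfin : ({0, α, γ} : Set K).Finite :=
    (Set.finite_singleton γ).insert α |>.insert 0
  -- norms
  have hnormd : ‖(d : K)‖ = 1 := by
    rw [hnat d]
    have hnd : ¬ p ∣ d := by
      rintro ⟨k, rfl⟩
      rcases Nat.lt_or_ge k 2 with hk | hk
      · interval_cases k <;> omega
      · nlinarith
    rw [(padicNorm.nat_eq_one_iff d).mpr hnd]
    norm_num
  have hnormdp : ‖((d - p : ℕ) : K)‖ = 1 := by
    rw [hnat]
    have hnd : ¬ p ∣ (d - p) := by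
      intro h
      have := Nat.le_of_dvd (by omega) h
      omega
    rw [(padicNorm.nat_eq_one_iff _).mpr hnd]
    norm_num
  have hnormp : ‖(p : K)‖ = ((p : ℝ))⁻¹ := by
    rw [hnat p, padicNorm.padicNorm_p (by omega)]
    push_cast
    ring
  have hpR : (0 : ℝ) < (p : ℝ) := by positivity
  have hnormα : ‖α‖ ^ (d - 1) = (p : ℝ) ^ p := by
    have h1 : ‖α ^ (d - 1)‖ = ‖α‖ ^ (d - 1) := norm_pow _ _
    rw [hα] at h1
    rw [norm_div, norm_mul, norm_pow, norm_pow, norm_pow, norm_neg, hnormd, hnormp] at h1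
    have h2 : ‖(d : K) - (p : K)‖ = 1 := by
      rw [← Nat.cast_sub hpd.le]; exact hnormdp
    rw [h2] at h1
    rw [← h1, one_pow, one_pow, mul_one, inv_pow, one_div, inv_inv]
  have hnormfinal : ‖α‖ = (p : ℝ) ^ ((p : ℝ) / ((d : ℝ) - 1)) := by
    have hd1 : d - 1 ≠ 0 := by omega
    have h1 := Real.pow_rpow_inv_natCast (norm_nonneg α) hd1
    rw [hnormα] at h1
    rw [← h1, ← Real.rpow_natCast (p : ℝ) p, ← Real.rpow_mul hpR.le]
    congr 1
    rw [div_eq_mul_inv]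
    congr 2
    rw [Nat.cast_sub (by omega : 1 ≤ d), Nat.cast_one]
  refine ⟨⟨?_, ?_, h0⟩, ?_, ?_, hcritα, hnormfinal⟩
  · rw [hf]
    exact (monic_X_pow _).mul ((monic_X_sub_C α).pow p)
  · rw [hf]
    rw [natDegree_mul (monic_X_pow _).ne_zero ((monic_X_sub_C α).pow p).ne_zero]
    rw [natDegree_X_pow, natDegree_pow, natDegree_X_sub_C, mul_one, hmd]
  · intro c hc
    apply Set.Finite.subset hfin
    rintro x ⟨n, rfl⟩
    rcases hcrit c hc with rfl | rfl | rfl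
    · exact horbit _ (Set.mem_insert _ _) n
    · exact horbit _ (Set.mem_insert_of_mem _ (Set.mem_insert _ _)) n
    · exact horbit _ (Set.mem_insert_of_mem _ (Set.mem_insert_of_mem _ rfl)) n
  · intro c hc
    refine ⟨‖α‖ + ‖γ‖, fun n => ?_⟩
    have hmem : (fun z => f.eval z)^[n] c ∈ ({0, α, γ} : Set K) := by
      rcases hcrit c hc with rfl | rfl | rfl
      · exact horbit _ (Set.mem_insert _ _) n
      · exact horbit _ (Set.mem_insert_of_mem _ (Set.mem_insert _ _)) n
      · exact horbit _ (Set.mem_insert_of_mem _ (Set.mem_insert_of_mem _ rfl)) n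
    have hγn := norm_nonneg γ
    have hαn := norm_nonneg α
    rcases hmem with h | h | h <;> rw [h]
    · rw [norm_zero]; linarith
    · linarith
    · linarith
end

section
/- Let p be a prime and d = 2p. A polynomial f ∈ P_d is post-critically bounded if and only if every critical point c of f satisfies |c| ≤ 1. -/
open Polynomial

namespace Stmt2Aux

variable {K : Type*} [NormedField K]

lemma na_add_le (hna : IsNonarchimedean (fun x : K => ‖x‖)) (x y : K) :
    ‖x + y‖ ≤ max ‖x‖ ‖y‖ := hna x y

lemma na_sub_le (hna : IsNonarchimedean (fun x : K => ‖x‖)) (x y : K) :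
    ‖x - y‖ ≤ max ‖x‖ ‖y‖ := by
  have := hna x (-y); simpa [sub_eq_add_neg] using this

lemma na_eq_of_lt (hna : IsNonarchimedean (fun x : K => ‖x‖)) {x y : K}
    (h : ‖y‖ < ‖x‖) : ‖x + y‖ = ‖x‖ := by
  refine le_antisymm ((hna x y).trans (by simp [h.le])) ?_
  by_contra hlt
  push_neg at hlt
  have h2 : ‖x‖ ≤ max ‖x + y‖ ‖y‖ := by
    have := hna (x + y) (-y); simpa using this
  rcases max_cases ‖x + y‖ ‖y‖ with ⟨he, _⟩ | ⟨he, _⟩ <;> rw [he] at h2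
  · exact absurd (lt_of_le_of_lt h2 hlt) (lt_irrefl _)
  · exact absurd (lt_of_le_of_lt h2 h) (lt_irrefl _)

lemma na_msum_le (hna : IsNonarchimedean (fun x : K => ‖x‖)) {B : ℝ} (hB : 0 ≤ B) :
    ∀ (s : Multiset K), (∀ x ∈ s, ‖x‖ ≤ B) → ‖s.sum‖ ≤ B := by
  intro s
  induction s using Multiset.induction with
  | empty => intro _; simpa using hB
  | cons a t ih =>
    intro h
    rw [Multiset.sum_cons]
    refine (hna a t.sum).trans (max_le (h a (by simp)) (ih fun x hx => h x (by simp [hx])))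

lemma na_msum_lt (hna : IsNonarchimedean (fun x : K => ‖x‖)) {B : ℝ} (hB : 0 < B) :
    ∀ (s : Multiset K), (∀ x ∈ s, ‖x‖ < B) → ‖s.sum‖ < B := by
  intro s
  induction s using Multiset.induction with
  | empty => intro _; simpa using hB
  | cons a t ih =>
    intro h
    rw [Multiset.sum_cons]
    exact lt_of_le_of_lt (hna a t.sum)
      (max_lt (h a (by simp)) (ih fun x hx => h x (by simp [hx])))

lemma na_fsum_le (hna : IsNonarchimedean (fun x : K => ‖x‖)) {B : ℝ} (hB : 0 ≤ B)
    {ι : Type*} (s : Finset ι) (g : ι → K) (h : ∀ i ∈ s, ‖g i‖ ≤ B) :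
    ‖∑ i ∈ s, g i‖ ≤ B := by
  have : (∑ i ∈ s, g i) = (s.val.map g).sum := rfl
  rw [this]
  refine na_msum_le hna hB _ ?_
  intro x hx
  rcases Multiset.mem_map.mp hx with ⟨i, hi, rfl⟩
  exact h i hi

lemma na_fsum_lt (hna : IsNonarchimedean (fun x : K => ‖x‖)) {B : ℝ} (hB : 0 < B)
    {ι : Type*} (s : Finset ι) (g : ι → K) (h : ∀ i ∈ s, ‖g i‖ < B) :
    ‖∑ i ∈ s, g i‖ < B := by
  have : (∑ i ∈ s, g i) = (s.val.map g).sum := rfl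
  rw [this]
  refine na_msum_lt hna hB _ ?_
  intro x hx
  rcases Multiset.mem_map.mp hx with ⟨i, hi, rfl⟩
  exact h i hi

lemma mprod_le {M : ℝ} (hM : 0 ≤ M) :
    ∀ (s : Multiset K), (∀ x ∈ s, ‖x‖ ≤ M) → ‖s.prod‖ ≤ M ^ Multiset.card s := by
  intro s
  induction s using Multiset.induction with
  | empty => intro _; simp
  | cons a t ih =>
    intro h
    rw [Multiset.prod_cons, Multiset.card_cons, norm_mul, pow_succ']
    exact mul_le_mul (h a (by simp)) (ih fun x hx => h x (by simp [hx])) (norm_nonneg _)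
      hM

lemma exists_max_norm : ∀ (s : Multiset K), s ≠ 0 → ∃ x ∈ s, ∀ y ∈ s, ‖y‖ ≤ ‖x‖ := by
  intro s
  induction s using Multiset.induction with
  | empty => intro h; exact absurd rfl h
  | cons a t ih =>
    intro _
    rcases eq_or_ne t 0 with rfl | ht
    · exact ⟨a, by simp⟩
    · rcases ih ht with ⟨x, hx, hmax⟩
      rcases le_total ‖a‖ ‖x‖ with h | h
      · exact ⟨x, by simp [hx], by
          intro y hy
          rcases Multiset.mem_cons.mp hy with rfl | hy
          · exact h
          · exact hmax y hy⟩
      · exact ⟨a, by simp, by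
          intro y hy
          rcases Multiset.mem_cons.mp hy with rfl | hy
          · exact le_rfl
          · exact (hmax y hy).trans h⟩



variable {K : Type*} [NormedField K]

lemma coeff_prod_bound (hna : IsNonarchimedean (fun x : K => ‖x‖)) {M : ℝ} (hM : 1 ≤ M) :
    ∀ (s : Multiset K), (∀ c ∈ s, ‖c‖ ≤ M) → ∀ j,
      ‖((s.map fun c => (X : K[X]) - C c).prod).coeff j‖ ≤ M ^ (Multiset.card s - j) := by
  have hM0 : (0:ℝ) ≤ M := le_trans zero_le_one hM
  intro s
  induction s using Multiset.induction with
  | empty =>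
    intro _ j
    rcases Nat.eq_zero_or_pos j with rfl | hj
    · simp
    · have h1 : (((0:Multiset K)).map fun c => (X : K[X]) - C c).prod = 1 := by simp
      rw [h1, Polynomial.coeff_one, if_neg (by omega), norm_zero]
      positivity
  | cons a t ih =>
    intro h j
    have ha : ‖a‖ ≤ M := h a (by simp)
    have ht : ∀ c ∈ t, ‖c‖ ≤ M := fun c hc => h c (by simp [hc])
    set Q := ((t.map fun c => (X : K[X]) - C c).prod) with hQ
    have hQdeg : Q.natDegree = Multiset.card t := natDegree_multiset_prod_X_sub_C_eq_card t
    have hprod : ((a ::ₘ t).map fun c => (X : K[X]) - C c).prod = ((X : K[X]) - C a) * Q := by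
      rw [Multiset.map_cons, Multiset.prod_cons]
    rw [hprod, Multiset.card_cons]
    rcases Nat.eq_zero_or_pos j with rfl | hj
    · rw [Polynomial.mul_coeff_zero]
      have : ((X : K[X]) - C a).coeff 0 = -a := by simp
      rw [this, norm_mul, norm_neg]
      calc ‖a‖ * ‖Q.coeff 0‖ ≤ M * M ^ (Multiset.card t - 0) :=
            mul_le_mul ha (ih ht 0) (norm_nonneg _) hM0
        _ = M ^ (Multiset.card t + 1 - 0) := by
            rw [Nat.sub_zero, Nat.sub_zero, pow_succ']
    · obtain ⟨i, rfl⟩ := Nat.exists_eq_add_of_lt hj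
      rw [zero_add] at *
      have hco : (((X : K[X]) - C a) * Q).coeff (i + 1) = Q.coeff i - a * Q.coeff (i + 1) := by
        rw [sub_mul, Polynomial.coeff_sub, Polynomial.coeff_X_mul]
        simp [Polynomial.coeff_C_mul]
      rw [hco]
      have hsub : ‖Q.coeff i - a * Q.coeff (i+1)‖ ≤ max ‖Q.coeff i‖ ‖a * Q.coeff (i+1)‖ := by
        have := hna (Q.coeff i) (-(a * Q.coeff (i+1)))
        simpa [sub_eq_add_neg] using this
      refine hsub.trans (max_le ?_ ?_)
      · have := ih ht i
        refine this.trans (le_of_eq ?_)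
        congr 1
        omega
      · rcases le_or_gt (i + 1) (Multiset.card t) with hle | hgt
        · have h2 := ih ht (i + 1)
          rw [norm_mul]
          calc ‖a‖ * ‖Q.coeff (i+1)‖ ≤ M * M ^ (Multiset.card t - (i+1)) :=
                mul_le_mul ha h2 (norm_nonneg _) hM0
            _ = M ^ (Multiset.card t - (i+1) + 1) := by rw [pow_succ']
            _ = M ^ (Multiset.card t + 1 - (i+1)) := by congr 1; omega
        · have : Q.coeff (i + 1) = 0 :=
            Polynomial.coeff_eq_zero_of_natDegree_lt (by omega)
          rw [this, mul_zero, norm_zero]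
          positivity

lemma prod_approx (hna : IsNonarchimedean (fun x : K => ‖x‖)) {A : K} (hA : A ≠ 0) :
    ∀ (xs : Multiset K), (∀ x ∈ xs, ‖x - A‖ < ‖A‖) →
      ‖xs.prod - A ^ Multiset.card xs‖ < ‖A‖ ^ Multiset.card xs := by
  have hA0 : 0 < ‖A‖ := norm_pos_iff.mpr hA
  intro xs
  induction xs using Multiset.induction with
  | empty => intro _; simpa using zero_lt_one
  | cons x t ih =>
    intro h
    have hx : ‖x - A‖ < ‖A‖ := h x (by simp)
    have ht := ih fun y hy => h y (by simp [hy])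
    have hPt : ‖t.prod‖ ≤ ‖A‖ ^ Multiset.card t := by
      have : t.prod = (t.prod - A ^ Multiset.card t) + A ^ Multiset.card t := by ring
      rw [this]
      refine (hna _ _).trans (max_le ht.le (by show ‖A ^ Multiset.card t‖ ≤ _; rw [norm_pow]))
    rw [Multiset.prod_cons, Multiset.card_cons]
    have hsplit : x * t.prod - A ^ (Multiset.card t + 1)
        = (x - A) * t.prod + A * (t.prod - A ^ Multiset.card t) := by ring
    rw [hsplit]
    refine lt_of_le_of_lt (hna _ _) (max_lt ?_ ?_)
    · show ‖(x - A) * t.prod‖ < _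
      rw [norm_mul]
      calc ‖x - A‖ * ‖t.prod‖ ≤ ‖x - A‖ * ‖A‖ ^ Multiset.card t :=
            mul_le_mul_of_nonneg_left hPt (norm_nonneg _)
        _ < ‖A‖ * ‖A‖ ^ Multiset.card t := by
            exact mul_lt_mul_of_pos_right hx (by positivity)
        _ = ‖A‖ ^ (Multiset.card t + 1) := by rw [pow_succ']
    · show ‖A * (t.prod - A ^ Multiset.card t)‖ < _
      rw [norm_mul, pow_succ']
      exact mul_lt_mul_of_pos_left ht hA0

lemma filter_powersetCard {α : Type*} (pr : α → Prop) [DecidablePred pr] :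
    ∀ (s : Multiset α) (n : ℕ),
      (Multiset.powersetCard n s).filter (fun T => ∀ x ∈ T, pr x)
        = Multiset.powersetCard n (s.filter pr) := by
  intro s
  induction s using Multiset.induction with
  | empty =>
    intro n
    cases n with
    | zero =>
      simp only [Multiset.powersetCard_zero_left]
      rw [Multiset.filter_singleton, if_pos (fun x hx => absurd hx (Multiset.notMem_zero x))]
    | succ n => simp [Multiset.powersetCard_zero_right]
  | cons a t ih =>
    intro n
    cases n with
    | zero =>
      simp only [Multiset.powersetCard_zero_left]
      rw [Multiset.filter_singleton, if_pos (fun x hx => absurd hx (Multiset.notMem_zero x))]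
    | succ n =>
      rw [Multiset.powersetCard_cons, Multiset.filter_add, Multiset.filter_map]
      by_cases hpa : pr a
      · have h1 : Multiset.filter ((fun T => ∀ x ∈ T, pr x) ∘ Multiset.cons a)
            (Multiset.powersetCard n t) = Multiset.filter (fun T => ∀ x ∈ T, pr x)
            (Multiset.powersetCard n t) := by
          apply Multiset.filter_congr
          intro T _
          constructor
          · intro h x hx; exact h x (Multiset.mem_cons_of_mem hx)
          · intro h x hx
            rcases Multiset.mem_cons.mp hx with rfl | hx
            · exact hpa
            · exact h x hx
        rw [h1, ih, ih, Multiset.filter_cons_of_pos _ hpa, Multiset.powersetCard_cons]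
      · have h1 : Multiset.filter ((fun T => ∀ x ∈ T, pr x) ∘ Multiset.cons a)
            (Multiset.powersetCard n t) = 0 := by
          rw [Multiset.filter_eq_nil]
          intro T _ hall
          exact hpa (hall a (Multiset.mem_cons_self a T))
        rw [h1, ih, Multiset.filter_cons_of_neg _ hpa]
        simp

lemma choose_mod (p : ℕ) (hp : p.Prime) :
    ∀ r : ℕ, r < p → (((p + r).choose p : ℕ) : ZMod p) = 1 := by
  intro r
  induction r with
  | zero => intro _; simp
  | succ r ih =>
    intro hr
    obtain ⟨q, hq⟩ : ∃ q, p = q + 1 := ⟨p - 1, by omega⟩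
    have hpas : (p + (r+1)).choose p = (p + r).choose q + (p + r).choose p := by
      have e1 : p + (r + 1) = (p + r) + 1 := by omega
      rw [e1, hq]
      have e2 : q + 1 + r = q + r + 1 := by omega
      rw [e2]
      exact Nat.choose_succ_succ' (q + r + 1) q
    have hdvd : p ∣ (p + r).choose q := by
      have e3 : p + r = q + (r + 1) := by omega
      rw [e3]
      exact hp.dvd_choose_add (by omega) (by omega) (by omega)
    rw [hpas]
    push_cast
    rw [(ZMod.natCast_eq_zero_iff _ _).mpr hdvd, ih (by omega)]
    ring



variable {K : Type*} [NormedField K]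

lemma one_le_prod_norm : ∀ (s : Multiset K), (∀ x ∈ s, 1 ≤ ‖x‖) → 1 ≤ ‖s.prod‖ := by
  intro s
  induction s using Multiset.induction with
  | empty => intro _; simp
  | cons a t ih =>
    intro h
    rw [Multiset.prod_cons, norm_mul]
    have h1 := h a (by simp)
    have h2 := ih fun x hx => h x (by simp [hx])
    calc (1:ℝ) = 1 * 1 := by ring
      _ ≤ ‖a‖ * ‖t.prod‖ := mul_le_mul h1 h2 zero_le_one (le_trans zero_le_one h1)

lemma root_unity_close (hna : IsNonarchimedean (fun x : K => ‖x‖)) (p : ℕ) (hp : p.Prime)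
    (hchoose : ∀ k, 0 < k → k < p → ‖((p.choose k : ℕ) : K)‖ ≤ (p:ℝ)⁻¹)
    {ζ : K} (hζ : ζ ^ p = 1) : ‖ζ - 1‖ < 1 := by
  by_contra hge
  push_neg at hge
  set x := ζ - 1 with hxdef
  have hx1 : x + 1 = ζ := by ring
  have hp2 : 2 ≤ p := hp.two_le
  have hbin : ∑ m ∈ Finset.range (p + 1), x ^ m * ((p.choose m : ℕ) : K) = 1 := by
    have := add_pow x 1 p
    simp only [one_pow, mul_one] at this
    rw [← this, hx1, hζ]
  have hsum0 : ∑ i ∈ Finset.range p, x ^ (i+1) * ((p.choose (i+1) : ℕ) : K) = 0 := by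
    have h2 := Finset.sum_range_succ' (fun m => x ^ m * ((p.choose m : ℕ) : K)) p
    rw [h2] at hbin
    simp only [pow_zero, Nat.choose_zero_right, Nat.cast_one, one_mul] at hbin
    exact add_eq_right.mp hbin
  obtain ⟨q, hq⟩ : ∃ q, p = q + 1 := ⟨p - 1, by omega⟩
  have htop : x ^ p = -∑ i ∈ Finset.range q, x ^ (i+1) * ((p.choose (i+1) : ℕ) : K) := by
    have hr : Finset.range p = Finset.range (q + 1) := by rw [hq]
    have h3 := Finset.sum_range_succ (fun i => x ^ (i+1) * ((p.choose (i+1) : ℕ) : K)) q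
    rw [hr, h3] at hsum0
    have hq1 : q + 1 = p := by omega
    rw [hq1, Nat.choose_self] at hsum0
    simp only [Nat.cast_one, mul_one] at hsum0
    exact eq_neg_of_add_eq_zero_right hsum0
  have hxpos : (0:ℝ) < ‖x‖ ^ q := by positivity
  have hbound : ‖x‖ ^ p ≤ (p:ℝ)⁻¹ * ‖x‖ ^ q := by
    rw [← norm_pow, htop, norm_neg]
    refine na_fsum_le hna (by positivity) _ _ ?_
    intro i hi
    rw [Finset.mem_range] at hi
    rw [norm_mul, norm_pow]
    calc ‖x‖ ^ (i+1) * ‖((p.choose (i+1) : ℕ) : K)‖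
        ≤ ‖x‖ ^ q * (p:ℝ)⁻¹ := by
          refine mul_le_mul ?_ (hchoose (i+1) (by omega) (by omega)) (norm_nonneg _) (by positivity)
          exact pow_le_pow_right₀ hge (by omega)
      _ = (p:ℝ)⁻¹ * ‖x‖ ^ q := by ring
  have hstep : ‖x‖ ^ q ≤ ‖x‖ ^ p := by
    exact pow_le_pow_right₀ hge (by omega)
  have hpinv : (p:ℝ)⁻¹ < 1 := by
    rw [inv_lt_one_iff₀]
    right
    exact_mod_cast hp.one_lt
  nlinarith [hbound, hstep, hxpos]

lemma near_one [IsAlgClosed K] (hna : IsNonarchimedean (fun x : K => ‖x‖)) (p : ℕ)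
    (hp : p.Prime)
    (hchoose : ∀ k, 0 < k → k < p → ‖((p.choose k : ℕ) : K)‖ ≤ (p:ℝ)⁻¹)
    {y : K} (h : ‖y ^ p - 1‖ < 1) : ‖y - 1‖ < 1 := by
  set g : K[X] := X ^ p - C 1 with hgdef
  have hmono : g.Monic := monic_X_pow_sub_C 1 hp.ne_zero
  have hsplit : Splits g := IsAlgClosed.splits g
  have hfact : g = (g.roots.map fun ζ => X - C ζ).prod :=
    hsplit.eq_prod_roots_of_monic hmono
  have heval : y ^ p - 1 = (g.roots.map fun ζ => y - ζ).prod := by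
    have h1 : g.eval y = y ^ p - 1 := by simp [hgdef]
    have h2 : g.eval y = ((g.roots.map fun ζ => X - C ζ).map (eval y)).prod := by
      conv_lhs => rw [hfact]
      exact eval_multiset_prod _ y
    rw [Multiset.map_map] at h2
    have h3 : ((eval y) ∘ fun ζ => X - C ζ) = fun ζ => y - ζ := by
      funext ζ; simp
    rw [h3] at h2
    rw [← h1, h2]
  obtain ⟨ζ, hζmem, hζclose⟩ : ∃ ζ ∈ g.roots, ‖y - ζ‖ < 1 := by
    by_contra hc
    push_neg at hc
    have : 1 ≤ ‖(g.roots.map fun ζ => y - ζ).prod‖ := by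
      refine one_le_prod_norm _ ?_
      intro z hz
      rcases Multiset.mem_map.mp hz with ⟨ζ, hζ, rfl⟩
      exact hc ζ hζ
    rw [← heval] at this
    linarith
  have hζroot : ζ ^ p = 1 := by
    have h0 : g.eval ζ = 0 := (Polynomial.mem_roots hmono.ne_zero).mp hζmem
    have h1 : ζ ^ p - 1 = 0 := by simpa [hgdef] using h0
    exact sub_eq_zero.mp h1
  have h1 := root_unity_close hna p hp hchoose hζroot
  have : ‖y - 1‖ ≤ max ‖y - ζ‖ ‖ζ - 1‖ := by
    have := hna (y - ζ) (ζ - 1)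
    simpa using this
  exact lt_of_le_of_lt this (max_lt hζclose h1)

lemma sum_map_sub {K : Type*} [NormedField K] {ι : Type*} (t : Multiset ι) (g h : ι → K) :
    (t.map fun x => g x - h x).sum = (t.map g).sum - (t.map h).sum := by
  induction t using Multiset.induction with
  | empty => simp
  | cons a t ih =>
    simp only [Multiset.map_cons, Multiset.sum_cons, ih]
    ring

end Stmt2Aux


/-- Let `p` be a prime and `d = 2p`. A polynomial `f ∈ P_d` is
post-critically bounded iff every critical point `c` of `f` satisfies `|c| ≤ 1`. -/
theorem stmt_2 (K : Type*) [NormedField K] [IsAlgClosed K] [CompleteSpace K]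
    (hna : IsNonarchimedean (fun x : K => ‖x‖))
    (p : ℕ) (hp : p.Prime)
    (hext : ∀ q : ℚ, ‖(q : K)‖ = (padicNorm p q : ℝ))
    (f : K[X]) (hmonic : f.Monic) (hdeg : f.natDegree = 2 * p) (hf0 : f.eval 0 = 0) :
    (∀ c : K, f.derivative.eval c = 0 →
      ∃ B : ℝ, ∀ n : ℕ, ‖(fun z => f.eval z)^[n] c‖ ≤ B) ↔
    (∀ c : K, f.derivative.eval c = 0 → ‖c‖ ≤ 1) := by
  classical
  haveI : Fact p.Prime := ⟨hp⟩
  have hp1 : 1 < p := hp.one_lt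
  have hppos : 0 < p := hp.pos
  have hnn : ∀ n : ℕ, ‖(n : K)‖ = (padicNorm p n : ℝ) := by
    intro n; have := hext (n : ℚ); rwa [Rat.cast_natCast] at this
  have hpK : ‖(p : K)‖ = (p : ℝ)⁻¹ := by
    rw [hnn p, padicNorm.padicNorm_p hp1]; push_cast; ring
  have hpinv_pos : (0:ℝ) < (p : ℝ)⁻¹ := by positivity
  have hpinv_lt : (p:ℝ)⁻¹ < 1 := by
    rw [inv_lt_one_iff₀]; right; exact_mod_cast hp1
  have h2K : ‖(2 : K)‖ ≤ 1 := by
    have : ((2:ℕ) : K) = (2 : K) := by norm_num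
    rw [← this, hnn 2]; exact_mod_cast padicNorm.of_nat 2
  have h2Knn : (0:ℝ) ≤ ‖(2:K)‖ := norm_nonneg _
  have hknorm : ∀ k : ℕ, 1 ≤ k → k ≤ 2*p - 1 → k ≠ p → ‖(k : K)‖ = 1 := by
    intro k h1 h2 h3
    rw [hnn k]
    have hnd : ¬ p ∣ k := by
      rintro ⟨c, rfl⟩
      rcases c with _ | _ | c
      · omega
      · omega
      · have h4 : p * (c+1+1) = p*c + p + p := by ring
        omega
    exact_mod_cast (padicNorm.nat_eq_one_iff k).mpr hnd
  have hkinv : ∀ k : ℕ, 1 ≤ k → k ≤ 2*p - 1 → (p:ℝ)⁻¹ ≤ ‖(k : K)‖ := by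
    intro k h1 h2
    by_cases hk : k = p
    · rw [hk, hpK]
    · rw [hknorm k h1 h2 hk]; exact hpinv_lt.le
  -- derivative structure
  have hcd : ∀ n : ℕ, f.derivative.coeff n = f.coeff (n+1) * ((n : K)+1) :=
    fun n => Polynomial.coeff_derivative f n
  have hc2p : f.coeff (2*p) = 1 := by
    have := hmonic.coeff_natDegree; rwa [hdeg] at this
  have hcast2p : (((2*p - 1 : ℕ) : K) + 1) = ((2*p : ℕ) : K) := by
    have h1 : ((2*p - 1 : ℕ) : K) = ((2*p : ℕ) : K) - 1 := by
      push_cast [Nat.cast_sub (by omega : 1 ≤ 2*p)]; ring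
    rw [h1]; ring
  have hFtop : f.derivative.coeff (2*p - 1) = ((2*p : ℕ) : K) := by
    rw [hcd, show 2*p - 1 + 1 = 2*p from by omega, hc2p, one_mul, hcast2p]
  have h2pKnorm : ‖((2*p : ℕ) : K)‖ = ‖(2:K)‖ * (p:ℝ)⁻¹ := by
    have : ((2*p : ℕ) : K) = (2 : K) * (p : K) := by push_cast; ring
    rw [this, norm_mul, hpK]
  have h2pne : ((2*p : ℕ) : K) ≠ 0 := by
    intro h
    have h1 : ‖((2*p : ℕ) : K)‖ = 0 := by rw [h, norm_zero]
    rw [hnn] at h1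
    have h2 : padicNorm p (2*p : ℕ) ≠ 0 := padicNorm.nonzero (by positivity)
    exact h2 (by exact_mod_cast h1)
  have hFne : f.derivative ≠ 0 := by
    intro h
    exact h2pne (by rw [← hFtop, h, Polynomial.coeff_zero])
  have hFdeg : f.derivative.natDegree = 2*p - 1 := by
    refine le_antisymm ?_ ?_
    · refine (Polynomial.natDegree_derivative_le f).trans ?_
      rw [hdeg]
    · exact Polynomial.le_natDegree_of_ne_zero (by rw [hFtop]; exact h2pne)
  have hsplit : Polynomial.Splits f.derivative := IsAlgClosed.splits _
  set s : Multiset K := f.derivative.roots with hs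
  have hscard : Multiset.card s = 2*p - 1 := by
    rw [hs, ← hFdeg]
    exact (Polynomial.splits_iff_card_roots.mp hsplit)
  have hlead : f.derivative.leadingCoeff = ((2*p : ℕ) : K) := by
    rw [Polynomial.leadingCoeff, hFdeg, hFtop]
  set P : K[X] := (s.map fun c => (X : K[X]) - C c).prod with hP
  have hFP : f.derivative = C ((2*p : ℕ) : K) * P := by
    conv_lhs => rw [hsplit.eq_prod_roots]
    rw [hlead]
  have hkey : ∀ j : ℕ, f.coeff (j+1) * ((j : K)+1) = ((2*p : ℕ) : K) * P.coeff j := by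
    intro j
    rw [← hcd, hFP, Polynomial.coeff_C_mul]
  have hkeyn : ∀ k : ℕ, 1 ≤ k →
      ‖f.coeff k‖ * ‖(k : K)‖ = ‖(2:K)‖ * (p:ℝ)⁻¹ * ‖P.coeff (k-1)‖ := by
    intro k h1
    have := hkey (k-1)
    rw [show k - 1 + 1 = k from by omega] at this
    have hcast : (((k-1 : ℕ) : K) + 1) = ((k : ℕ) : K) := by
      push_cast [Nat.cast_sub (by omega : 1 ≤ k)]; ring
    rw [hcast] at this
    have := congrArg (fun x => ‖x‖) this
    simpa [norm_mul, h2pKnorm, hpK, mul_assoc] using this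
  have hmem_s : ∀ c : K, f.derivative.eval c = 0 ↔ c ∈ s := by
    intro c
    rw [hs, Polynomial.mem_roots hFne]
    exact ⟨fun h => h, fun h => h⟩
  constructor
  · -- hard direction
    intro horb
    by_contra hcon
    push_neg at hcon
    obtain ⟨c₀, hc₀crit, hc₀big⟩ := hcon
    have hsne : s ≠ 0 := by
      intro h
      rw [h] at hscard
      simp at hscard
      omega
    obtain ⟨cm, hcm_mem, hcm_max⟩ := Stmt2Aux.exists_max_norm s hsne
    set γ := ‖cm‖ with hγdef
    have hγ1 : 1 < γ := lt_of_lt_of_le hc₀big (hcm_max c₀ ((hmem_s c₀).mp hc₀crit))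
    have hγ0 : (0:ℝ) < γ := lt_trans zero_lt_one hγ1
    have hroots_le : ∀ c ∈ s, ‖c‖ ≤ γ := fun c hc => hcm_max c hc
    have hPb : ∀ j, ‖P.coeff j‖ ≤ γ ^ (2*p - 1 - j) := by
      intro j
      have := Stmt2Aux.coeff_prod_bound hna hγ1.le s hroots_le j
      rwa [hscard] at this
    have hcoeff_np : ∀ k, 1 ≤ k → k ≤ 2*p - 1 → k ≠ p →
        ‖f.coeff k‖ ≤ (p:ℝ)⁻¹ * γ ^ (2*p - k) := by
      intro k h1 h2 h3
      have h := hkeyn k h1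
      rw [hknorm k h1 h2 h3, mul_one] at h
      rw [h]
      have hexp : 2*p - 1 - (k-1) = 2*p - k := by omega
      calc ‖(2:K)‖ * (p:ℝ)⁻¹ * ‖P.coeff (k-1)‖
          = ‖(2:K)‖ * ((p:ℝ)⁻¹ * ‖P.coeff (k-1)‖) := by ring
        _ ≤ 1 * ((p:ℝ)⁻¹ * γ ^ (2*p - k)) := by
            refine mul_le_mul h2K ?_ (by positivity) zero_le_one
            refine mul_le_mul_of_nonneg_left ?_ hpinv_pos.le
            rw [← hexp]; exact hPb (k-1)
        _ = (p:ℝ)⁻¹ * γ ^ (2*p - k) := by ring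
    have hcoeff_p_eq : ‖f.coeff p‖ = ‖(2:K)‖ * ‖P.coeff (p-1)‖ := by
      have h := hkeyn p (by omega)
      rw [hpK] at h
      have h2 : ‖(2:K)‖ * (p:ℝ)⁻¹ * ‖P.coeff (p-1)‖
          = (‖(2:K)‖ * ‖P.coeff (p-1)‖) * (p:ℝ)⁻¹ := by ring
      rw [h2] at h
      exact mul_right_cancel₀ (ne_of_gt hpinv_pos) h
    have hcoeff_p_le : ‖f.coeff p‖ ≤ ‖(2:K)‖ * γ ^ p := by
      rw [hcoeff_p_eq]
      refine mul_le_mul_of_nonneg_left ?_ h2Knn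
      have := hPb (p-1)
      rwa [show 2*p - 1 - (p-1) = p from by omega] at this
    have hcoeff_le : ∀ k, 1 ≤ k → k ≤ 2*p - 1 → ‖f.coeff k‖ ≤ γ ^ (2*p - k) := by
      intro k h1 h2
      by_cases h3 : k = p
      · rw [h3, show 2*p - p = p from by omega]
        refine hcoeff_p_le.trans ?_
        calc ‖(2:K)‖ * γ ^ p ≤ 1 * γ ^ p :=
              mul_le_mul_of_nonneg_right h2K (by positivity)
          _ = γ ^ p := by ring
      · refine (hcoeff_np k h1 h2 h3).trans ?_
        calc (p:ℝ)⁻¹ * γ ^ (2*p - k) ≤ 1 * γ ^ (2*p - k) :=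
              mul_le_mul_of_nonneg_right hpinv_lt.le (by positivity)
          _ = γ ^ (2*p - k) := by ring
    have heval_sum : ∀ z : K, f.eval z = ∑ i ∈ Finset.range (2*p+1), f.coeff i * z^i := by
      intro z
      have := Polynomial.eval_eq_sum_range (p := f) z
      rwa [hdeg] at this
    have hc0 : f.coeff 0 = 0 := by rw [Polynomial.coeff_zero_eq_eval_zero, hf0]
    -- escape estimate
    have hesc : ∀ z : K, γ < ‖z‖ → ‖f.eval z‖ = ‖z‖ ^ (2*p) := by
      intro z hz
      have hz1 : 1 < ‖z‖ := hγ1.trans hz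
      have hz0 : (0:ℝ) < ‖z‖ := lt_trans zero_lt_one hz1
      rw [heval_sum z, Finset.sum_range_succ, hc2p, one_mul, add_comm]
      rw [Stmt2Aux.na_eq_of_lt hna ?_, norm_pow]
      rw [norm_pow]
      refine Stmt2Aux.na_fsum_lt hna (by positivity) _ _ ?_
      intro i hi
      rw [Finset.mem_range] at hi
      rcases Nat.eq_zero_or_pos i with rfl | hipos
      · rw [hc0, zero_mul, norm_zero]; positivity
      · rw [norm_mul, norm_pow]
        calc ‖f.coeff i‖ * ‖z‖ ^ i ≤ γ ^ (2*p - i) * ‖z‖ ^ i := by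
              refine mul_le_mul_of_nonneg_right (hcoeff_le i hipos (by omega)) (by positivity)
          _ < ‖z‖ ^ (2*p - i) * ‖z‖ ^ i := by
              refine mul_lt_mul_of_pos_right ?_ (by positivity)
              exact pow_lt_pow_left₀ hz hγ0.le (by omega)
          _ = ‖z‖ ^ (2*p) := by rw [← pow_add]; congr 1; omega
    -- growth of orbits outside the ball
    have hgrow : ∀ x : K, γ < ‖x‖ → ∀ n : ℕ, ‖x‖ ^ (n+1) ≤ ‖(fun z => f.eval z)^[n] x‖ := by
      intro x hx
      have hx1 : 1 < ‖x‖ := hγ1.trans hx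
      intro n
      induction n with
      | zero => simp
      | succ n ih =>
        have hyγ : γ < ‖(fun z => f.eval z)^[n] x‖ := by
          refine lt_of_lt_of_le ?_ ih
          calc γ < ‖x‖ := hx
            _ ≤ ‖x‖ ^ (n+1) := le_self_pow₀ hx1.le (by omega)
        rw [Function.iterate_succ_apply']
        rw [hesc _ hyγ]
        calc ‖x‖ ^ (n+1+1) ≤ (‖x‖ ^ (n+1)) ^ (2*p) := by
              rw [← pow_mul]
              refine pow_le_pow_right₀ hx1.le ?_
              calc n+1+1 ≤ (n+1)*2 := by omega
                _ ≤ (n+1)*(2*p) := Nat.mul_le_mul_left _ (by omega)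
          _ ≤ ‖(fun z => f.eval z)^[n] x‖ ^ (2*p) :=
              pow_le_pow_left₀ (by positivity) ih _
    -- critical values are bounded by γ
    have hbddval : ∀ c ∈ s, ‖f.eval c‖ ≤ γ := by
      intro c hc
      by_contra hbig
      push_neg at hbig
      obtain ⟨B, hB⟩ := horb c ((hmem_s c).mpr hc)
      have h1 : 1 < ‖f.eval c‖ := hγ1.trans hbig
      obtain ⟨n, hn⟩ := pow_unbounded_of_one_lt B h1
      have h2 := hgrow (f.eval c) hbig n
      have h3 : (fun z => f.eval z)^[n] (f.eval c) = (fun z => f.eval z)^[n+1] c := by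
        rw [Function.iterate_succ_apply]
      rw [h3] at h2
      have h4 := hB (n+1)
      have h5 : ‖f.eval c‖ ^ n ≤ ‖f.eval c‖ ^ (n+1) := pow_le_pow_right₀ h1.le (by omega)
      linarith
    -- decomposition of values
    have hevalrest : ∀ z : K, f.eval z = z^(2*p) + f.coeff p * z^p +
        ∑ i ∈ (Finset.range (2*p)).erase p, f.coeff i * z^i := by
      intro z
      rw [heval_sum z, Finset.sum_range_succ, hc2p, one_mul]
      have hpe : p ∈ Finset.range (2*p) := by
        rw [Finset.mem_range]; omega
      rw [← Finset.add_sum_erase _ _ hpe]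
      ring
    have hrest_le : ∀ z : K, ‖z‖ ≤ γ →
        ‖∑ i ∈ (Finset.range (2*p)).erase p, f.coeff i * z^i‖ ≤ (p:ℝ)⁻¹ * γ^(2*p) := by
      intro z hz
      refine Stmt2Aux.na_fsum_le hna (by positivity) _ _ ?_
      intro i hi
      have hip : i ≠ p := Finset.ne_of_mem_erase hi
      have hi' : i < 2*p := Finset.mem_range.mp (Finset.mem_of_mem_erase hi)
      rcases Nat.eq_zero_or_pos i with rfl | hipos
      · rw [hc0, zero_mul, norm_zero]; positivity
      · rw [norm_mul, norm_pow]
        calc ‖f.coeff i‖ * ‖z‖ ^ i ≤ ((p:ℝ)⁻¹ * γ ^ (2*p - i)) * γ ^ i := by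
              refine mul_le_mul (hcoeff_np i hipos (by omega) hip) ?_ (by positivity) (by positivity)
              exact pow_le_pow_left₀ (norm_nonneg _) hz i
          _ = (p:ℝ)⁻¹ * γ^(2*p) := by rw [mul_assoc, ← pow_add]; congr 2; omega
    set a := f.coeff p with ha
    rcases lt_or_ge ‖a‖ (γ^p) with hA | hB'
    · -- Case A : the top critical point escapes
      have hvm : ‖f.eval cm‖ = γ ^ (2*p) := by
        rw [hevalrest cm]
        have hmain : ‖(cm : K)^(2*p)‖ = γ^(2*p) := by rw [norm_pow]
        have h1 : ‖a * cm^p + ∑ i ∈ (Finset.range (2*p)).erase p, f.coeff i * cm^i‖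
            < γ^(2*p) := by
          refine lt_of_le_of_lt (Stmt2Aux.na_add_le hna _ _) (max_lt ?_ ?_)
          · rw [norm_mul, norm_pow]
            calc ‖a‖ * γ^p < γ^p * γ^p := by
                  exact mul_lt_mul_of_pos_right hA (by positivity)
              _ = γ^(2*p) := by rw [← pow_add]; congr 1; omega
          · refine lt_of_le_of_lt (hrest_le cm le_rfl) ?_
            calc (p:ℝ)⁻¹ * γ^(2*p) < 1 * γ^(2*p) :=
                  mul_lt_mul_of_pos_right hpinv_lt (by positivity)
              _ = γ^(2*p) := by ring
        rw [add_assoc, Stmt2Aux.na_eq_of_lt hna (by rw [hmain]; exact h1), hmain]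
      have h2 := hbddval cm hcm_mem
      rw [hvm] at h2
      have h3 : γ ^ 1 < γ ^ (2*p) := by
        refine pow_lt_pow_right₀ hγ1 ?_
        omega
      rw [pow_one] at h3
      linarith
    · -- Case B : ‖a‖ = γ^p
      have h2eq : ‖(2:K)‖ = 1 := by
        by_contra hne
        have hlt : ‖(2:K)‖ < 1 := lt_of_le_of_ne h2K hne
        have hcon2 : ‖a‖ < γ^p := lt_of_le_of_lt hcoeff_p_le (by
          calc ‖(2:K)‖ * γ^p < 1 * γ^p := mul_lt_mul_of_pos_right hlt (by positivity)
            _ = γ^p := by ring)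
        linarith
      have haeq : ‖a‖ = γ^p := by
        refine le_antisymm ?_ hB'
        rw [h2eq, one_mul] at hcoeff_p_le
        exact hcoeff_p_le
      have hγppos : (0:ℝ) < γ^p := by positivity
      have hane : a ≠ 0 := by
        intro h
        rw [h, norm_zero] at haeq
        linarith
      have hnane : (-a : K) ≠ 0 := neg_ne_zero.mpr hane
      have hpodd : Odd p := by
        have h2n : padicNorm p 2 = 1 := by
          have h1 := hnn 2
          rw [show ((2:ℕ):K) = (2:K) from by norm_num] at h1
          rw [h1] at h2eq
          exact_mod_cast h2eq
        have hnd2 : ¬ p ∣ 2 := (padicNorm.nat_eq_one_iff 2).mp h2n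
        refine hp.odd_of_ne_two ?_
        rintro rfl
        exact hnd2 ⟨1, rfl⟩
      have hnat_le1 : ∀ n : ℕ, ‖(n : K)‖ ≤ 1 := by
        intro n
        rw [hnn]
        exact_mod_cast padicNorm.of_nat n
      have hchooseK : ∀ k, 0 < k → k < p → ‖((p.choose k : ℕ) : K)‖ ≤ (p:ℝ)⁻¹ := by
        intro k h1 h2
        obtain ⟨t, ht⟩ := hp.dvd_choose_self (by omega) h2
        rw [ht]
        have : ((p * t : ℕ) : K) = (p : K) * (t : K) := by push_cast; ring
        rw [this, norm_mul, hpK]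
        calc (p:ℝ)⁻¹ * ‖(t : K)‖ ≤ (p:ℝ)⁻¹ * 1 :=
              mul_le_mul_of_nonneg_left (hnat_le1 t) hpinv_pos.le
          _ = (p:ℝ)⁻¹ := by ring
      -- bad critical points
      have hbad : ∀ c ∈ s, ‖c‖ = γ → ‖c^p - (-a)‖ < ‖-a‖ := by
        intro c hc hcγ
        rw [norm_neg, haeq, sub_neg_eq_add]
        have hfc := hbddval c hc
        have hc2 : c^(2*p) = c^p * c^p := by rw [two_mul, pow_add]
        have hsplit2 : c^p * (c^p + a)
            = f.eval c - ∑ i ∈ (Finset.range (2*p)).erase p, f.coeff i * c^i := by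
          rw [hevalrest c, hc2]; ring
        have hnorm1 : ‖c^p * (c^p + a)‖ < γ^(2*p) := by
          rw [hsplit2]
          refine lt_of_le_of_lt (Stmt2Aux.na_sub_le hna _ _) (max_lt ?_ ?_)
          · refine lt_of_le_of_lt hfc ?_
            calc γ = γ^1 := by rw [pow_one]
              _ < γ^(2*p) := pow_lt_pow_right₀ hγ1 (by omega)
          · refine lt_of_le_of_lt (hrest_le c (le_of_eq hcγ)) ?_
            calc (p:ℝ)⁻¹ * γ^(2*p) < 1 * γ^(2*p) :=
                  mul_lt_mul_of_pos_right hpinv_lt (by positivity)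
              _ = γ^(2*p) := by ring
        rw [norm_mul, norm_pow, hcγ] at hnorm1
        have hpow2 : γ^(2*p) = γ^p * γ^p := by rw [← pow_add]; congr 1; omega
        rw [hpow2] at hnorm1
        exact lt_of_mul_lt_mul_left hnorm1 (by positivity)
      -- the algebraic identity a = 2 * P.coeff (p-1)
      have hpKne : ((p:ℕ) : K) ≠ 0 := by
        intro hz
        rw [show ((p:ℕ):K) = (p:K) from rfl, hz, norm_zero] at hpK
        exact absurd hpK.symm (ne_of_gt hpinv_pos)
      have hap : a = (2:K) * P.coeff (p-1) := by
        have h := hkey (p-1)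
        rw [show p - 1 + 1 = p from by omega] at h
        have hcastp : (((p-1:ℕ):K) + 1) = ((p:ℕ):K) := by
          push_cast [Nat.cast_sub (by omega : 1 ≤ p)]; ring
        rw [hcastp] at h
        have h2p2 : ((2*p:ℕ):K) = (2:K) * ((p:ℕ):K) := by push_cast; ring
        rw [h2p2] at h
        have harr : (2:K) * ((p:ℕ):K) * P.coeff (p-1)
            = ((2:K) * P.coeff (p-1)) * ((p:ℕ):K) := by ring
        rw [harr] at h
        exact mul_right_cancel₀ hpKne h
      have hvieta : P.coeff (p-1) = - Multiset.esymm s p := by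
        have h := Multiset.prod_X_sub_C_coeff s
          (show p - 1 ≤ Multiset.card s from by rw [hscard]; omega)
        rw [hscard, show 2*p - 1 - (p-1) = p from by omega] at h
        rw [← hP] at h
        rw [h, hpodd.neg_one_pow]
        ring
      have ha2 : a = -2 * Multiset.esymm s p := by rw [hap, hvieta]; ring
      -- split the elementary symmetric sum into big and small subsets
      set Mb := (Multiset.powersetCard p s).filter (fun T => ∀ x ∈ T, ‖x‖ = γ) with hMb
      set Mn := (Multiset.powersetCard p s).filter (fun T => ¬ ∀ x ∈ T, ‖x‖ = γ) with hMn
      have hMsplit : Multiset.powersetCard p s = Mb + Mn :=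
        (Multiset.filter_add_not _ _).symm
      set Sb := (Mb.map Multiset.prod).sum with hSbdef
      set Sn := (Mn.map Multiset.prod).sum with hSndef
      have hesymm : Multiset.esymm s p = Sb + Sn := by
        rw [Multiset.esymm, hMsplit, Multiset.map_add, Multiset.sum_add]
      have hSnlt : ‖Sn‖ < γ^p := by
        refine Stmt2Aux.na_msum_lt hna (by positivity) _ ?_
        intro x hx
        rcases Multiset.mem_map.mp hx with ⟨T, hT, rfl⟩
        rw [hMn, Multiset.mem_filter] at hT
        obtain ⟨hTM, hTnb⟩ := hT
        rw [Multiset.mem_powersetCard] at hTM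
        obtain ⟨hTle, hTcard⟩ := hTM
        push_neg at hTnb
        obtain ⟨c, hcT, hcne⟩ := hTnb
        have hclt : ‖c‖ < γ :=
          lt_of_le_of_ne (hroots_le c (Multiset.mem_of_le hTle hcT)) hcne
        obtain ⟨T', rfl⟩ := Multiset.exists_cons_of_mem hcT
        rw [Multiset.prod_cons, norm_mul]
        have hT'le : ‖T'.prod‖ ≤ γ^(Multiset.card T') := by
          refine Stmt2Aux.mprod_le hγ0.le T' ?_
          intro x hx
          exact hroots_le x (Multiset.mem_of_le hTle (Multiset.mem_cons_of_mem hx))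
        have hcardT' : Multiset.card T' = p - 1 := by
          rw [Multiset.card_cons] at hTcard; omega
        rw [hcardT'] at hT'le
        calc ‖c‖ * ‖T'.prod‖ ≤ ‖c‖ * γ^(p-1) :=
              mul_le_mul_of_nonneg_left hT'le (norm_nonneg c)
          _ < γ * γ^(p-1) := mul_lt_mul_of_pos_right hclt (by positivity)
          _ = γ^p := by rw [← pow_succ']; congr 1; omega
      have hC1 : ∀ x ∈ Mb.map (fun T => T.prod - (-a)), ‖x‖ < γ^p := by
        intro x hx
        rcases Multiset.mem_map.mp hx with ⟨T, hT, rfl⟩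
        rw [hMb, Multiset.mem_filter] at hT
        obtain ⟨hTM, hTb⟩ := hT
        rw [Multiset.mem_powersetCard] at hTM
        obtain ⟨hTle, hTcard⟩ := hTM
        have h1 : ∀ x ∈ T.map (fun c => c^p), ‖x - (-a)‖ < ‖-a‖ := by
          intro x hx
          rcases Multiset.mem_map.mp hx with ⟨c, hc, rfl⟩
          exact hbad c (Multiset.mem_of_le hTle hc) (hTb c hc)
        have h2 := Stmt2Aux.prod_approx hna hnane _ h1
        rw [Multiset.card_map, hTcard] at h2
        have h3 : (T.map (fun c => c^p)).prod = T.prod ^ p := by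
          have h4 := Multiset.prod_map_pow (m := T) (f := fun c : K => c) (n := p)
          rw [Multiset.map_id'] at h4
          exact h4
        rw [h3] at h2
        rw [norm_neg, haeq] at h2
        have hpne0 : ((-a : K))^p ≠ 0 := pow_ne_zero _ hnane
        set y := T.prod * (-a)⁻¹ with hy
        have hpow : y^p - 1 = (T.prod^p - (-a)^p) * ((-a)^p)⁻¹ := by
          rw [sub_mul, mul_inv_cancel₀ hpne0, hy, mul_pow, inv_pow]
        have hyplt : ‖y^p - 1‖ < 1 := by
          rw [hpow, norm_mul, norm_inv, norm_pow, norm_neg, haeq]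
          calc ‖T.prod^p - (-a)^p‖ * ((γ^p)^p)⁻¹
              < (γ^p)^p * ((γ^p)^p)⁻¹ :=
                mul_lt_mul_of_pos_right h2 (by positivity)
            _ = 1 := mul_inv_cancel₀ (by positivity)
        have h4 := Stmt2Aux.near_one hna p hp hchooseK hyplt
        have h5 : T.prod - (-a) = (-a) * (y - 1) := by
          rw [hy]; field_simp; ring
        rw [h5, norm_mul, norm_neg, haeq]
        calc γ^p * ‖y - 1‖ < γ^p * 1 := mul_lt_mul_of_pos_left h4 hγppos
          _ = γ^p := by ring
      set D := (Mb.map (fun T => T.prod - (-a))).sum with hDdef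
      have hDlt : ‖D‖ < γ^p := Stmt2Aux.na_msum_lt hna (by positivity) _ hC1
      set N := Multiset.card Mb with hNdef
      have hSbeq : Sb = (N:K) * (-a) + D := by
        have h1 : D = Sb - (Mb.map (fun _ => (-a : K))).sum := by
          rw [hDdef, hSbdef]
          exact Stmt2Aux.sum_map_sub Mb Multiset.prod (fun _ => (-a : K))
        rw [Multiset.map_const', Multiset.sum_replicate, ← hNdef, nsmul_eq_mul] at h1
        rw [h1]; ring
      -- count the big subsets
      have hNval : N = (Multiset.card (s.filter (fun c : K => ‖c‖ = γ))).choose p := by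
        rw [hNdef, hMb]
        rw [Stmt2Aux.filter_powersetCard (fun c : K => ‖c‖ = γ) s p]
        rw [Multiset.card_powersetCard]
      -- the final equation and contradiction
      have hkeyeq : a * (2*(N:K) - 1) = (2:K)*D + (2:K)*Sn := by
        have h1 : a = -2 * (Sb + Sn) := by rw [ha2, hesymm]
        linear_combination -h1 + 2 * hSbeq
      have hnorm2 : ‖(2:K)*D + (2:K)*Sn‖ < γ^p := by
        refine lt_of_le_of_lt (Stmt2Aux.na_add_le hna _ _) (max_lt ?_ ?_)
        · rw [norm_mul, h2eq, one_mul]; exact hDlt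
        · rw [norm_mul, h2eq, one_mul]; exact hSnlt
      have hfin : ‖(2*(N:K) - 1 : K)‖ < 1 := by
        have h6 : ‖a * (2*(N:K) - 1)‖ < γ^p := by
          rw [hkeyeq]; exact hnorm2
        rw [norm_mul, haeq] at h6
        exact (mul_lt_iff_lt_one_right hγppos).mp h6
      have hdvd : ¬ ((p:ℤ) ∣ (2*(N:ℤ) - 1)) := by
        intro hdv
        have h7 : ((2*(N:ℤ) - 1 : ℤ) : ZMod p) = 0 :=
          (ZMod.intCast_zmod_eq_zero_iff_dvd _ _).mpr hdv
        push_cast at h7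
        set m' := Multiset.card (s.filter (fun c : K => ‖c‖ = γ)) with hm'
        have hmle : m' ≤ 2*p - 1 := by
          rw [hm', ← hscard]
          exact Multiset.card_le_card (Multiset.filter_le _ _)
        rcases lt_or_ge m' p with hmlt | hmge
        · have hN0 : N = 0 := by rw [hNval]; exact Nat.choose_eq_zero_of_lt hmlt
          rw [hN0] at h7
          push_cast at h7
          have hone : (1 : ZMod p) = 0 := by linear_combination -h7
          exact one_ne_zero hone
        · have h8 := Stmt2Aux.choose_mod p hp (m' - p) (by omega)
          have h9 : (N : ZMod p) = 1 := by
            rw [hNval, show m' = p + (m' - p) from by omega]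
            exact h8
          rw [h9] at h7
          have hone : (1 : ZMod p) = 0 := by linear_combination h7
          exact one_ne_zero hone
      have hcast : ((2*(N:ℤ) - 1 : ℤ) : K) = 2*(N:K) - 1 := by push_cast; ring
      have h9 : ‖((2*(N:ℤ) - 1 : ℤ) : K)‖ = 1 := by
        have h10 := hext (((2*(N:ℤ) - 1 : ℤ) : ℚ))
        rw [Rat.cast_intCast] at h10
        rw [h10]
        exact_mod_cast (padicNorm.int_eq_one_iff _).mpr hdvd
      rw [← hcast, h9] at hfin
      exact lt_irrefl _ hfin


  · -- easy direction
    intro hball c hcrit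
    have hroots1 : ∀ x ∈ s, ‖x‖ ≤ 1 := by
      intro x hx
      exact hball x ((hmem_s x).mpr hx)
    have hPle : ∀ j, ‖P.coeff j‖ ≤ 1 := by
      intro j
      have := Stmt2Aux.coeff_prod_bound hna le_rfl s hroots1 j
      simpa using this
    have hcoeffle : ∀ i : ℕ, ‖f.coeff i‖ ≤ 1 := by
      intro i
      rcases Nat.eq_zero_or_pos i with rfl | hi
      · rw [Polynomial.coeff_zero_eq_eval_zero, hf0, norm_zero]; exact zero_le_one
      · rcases lt_trichotomy i (2*p) with hlt | heq | hgt
        · have h1 := hkeyn i hi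
          have h2 : ‖f.coeff i‖ * ‖(i : K)‖ ≤ (p:ℝ)⁻¹ := by
            rw [h1]
            calc ‖(2:K)‖ * (p:ℝ)⁻¹ * ‖P.coeff (i-1)‖ ≤ 1 * (p:ℝ)⁻¹ * 1 := by
                  apply mul_le_mul (mul_le_mul h2K le_rfl hpinv_pos.le zero_le_one)
                    (hPle _) (norm_nonneg _) (by positivity)
              _ = (p:ℝ)⁻¹ := by ring
          have h3 : (p:ℝ)⁻¹ ≤ ‖(i : K)‖ := hkinv i hi (by omega)
          by_contra hgt1
          push_neg at hgt1
          have h4 : (p:ℝ)⁻¹ < ‖f.coeff i‖ * ‖(i : K)‖ := by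
            nlinarith [hgt1, h3, hpinv_pos]
          linarith
        · rw [heq, hc2p, norm_one]
        · rw [Polynomial.coeff_eq_zero_of_natDegree_lt (by rw [hdeg]; omega), norm_zero]
          exact zero_le_one
    have hstep : ∀ z : K, ‖z‖ ≤ 1 → ‖f.eval z‖ ≤ 1 := by
      intro z hz
      rw [Polynomial.eval_eq_sum_range]
      refine Stmt2Aux.na_fsum_le hna zero_le_one _ _ ?_
      intro i _
      rw [norm_mul, norm_pow]
      calc ‖f.coeff i‖ * ‖z‖ ^ i ≤ 1 * 1 :=
            mul_le_mul (hcoeffle i) (pow_le_one₀ (norm_nonneg z) hz) (by positivity) zero_le_one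
        _ = 1 := by ring
    refine ⟨1, ?_⟩
    intro n
    induction n with
    | zero => simpa using hball c hcrit
    | succ n ih =>
      rw [Function.iterate_succ_apply']
      exact hstep _ ih
end

section
/- Let d ≥ 2 be an integer and p a prime with p > d. A polynomial f ∈ P_d is post-critically bounded if and only if every critical point c of f satisfies |c| ≤ 1. -/
open Polynomial

section NA
variable {K : Type*} [NormedField K]

lemma na_finset_sum_le (hna : IsNonarchimedean (fun x : K => ‖x‖)) {ι : Type*}
    (s : Finset ι) (g : ι → K) {B : ℝ} (hB : 0 ≤ B) (h : ∀ i ∈ s, ‖g i‖ ≤ B) :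
    ‖∑ i ∈ s, g i‖ ≤ B := by
  classical
  induction s using Finset.induction_on with
  | empty => simpa using hB
  | @insert a s' hx ih =>
      rw [Finset.sum_insert hx]
      refine le_trans (hna _ _) (max_le (h a (Finset.mem_insert_self a s'))
        (ih fun i hi => h i (Finset.mem_insert_of_mem hi)))

lemma na_add_eq_left (hna : IsNonarchimedean (fun x : K => ‖x‖)) {a b : K}
    (h : ‖b‖ < ‖a‖) : ‖a + b‖ = ‖a‖ := by
  refine le_antisymm (le_trans (hna a b) (max_le le_rfl h.le)) ?_
  have h2 : ‖a‖ ≤ max ‖a + b‖ ‖b‖ := by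
    have := hna (a + b) (-b)
    simpa using this
  rcases max_cases ‖a + b‖ ‖b‖ with ⟨he, _⟩ | ⟨he, _⟩
  · rw [he] at h2; exact h2
  · rw [he] at h2; exact absurd h2 (not_le.mpr h)

lemma coeff_prod_X_sub_C_le (hna : IsNonarchimedean (fun x : K => ‖x‖)) (R : ℝ) (hR : 1 ≤ R)
    (s : Multiset K) (hs : ∀ r ∈ s, ‖r‖ ≤ R) (j : ℕ) :
    ‖((s.map fun r => X - C r).prod).coeff j‖ ≤ R ^ (Multiset.card s - j) := by
  have hR0 : (0:ℝ) ≤ R := le_trans zero_le_one hR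
  induction s using Multiset.induction_on generalizing j with
  | empty =>
      simp only [Multiset.map_zero, Multiset.prod_zero, Multiset.card_zero]
      rcases Nat.eq_zero_or_pos j with rfl | hj
      · simp
      · rw [coeff_one, if_neg (by omega)]
        simpa using one_le_pow₀ hR
  | cons a s' ih =>
      rename_i ihmem
      have hs' : ∀ r ∈ s', ‖r‖ ≤ R := fun r hr => hs r (Multiset.mem_cons_of_mem hr)
      have ha : ‖a‖ ≤ R := hs a (Multiset.mem_cons_self a s')
      rw [Multiset.map_cons, Multiset.prod_cons]
      set P := (s'.map fun r => X - C r).prod with hP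
      have hdegP : P.natDegree = Multiset.card s' := natDegree_multiset_prod_X_sub_C_eq_card s'
      rw [mul_comm]
      rcases Nat.eq_zero_or_pos j with rfl | hj
      · have : (P * (X - C a)).coeff 0 = P.coeff 0 * (-a) := by
          simp [coeff_zero_eq_eval_zero]
        rw [this, Multiset.card_cons, Nat.sub_zero]
        rw [norm_mul, norm_neg]
        calc ‖P.coeff 0‖ * ‖a‖ ≤ R ^ (Multiset.card s' - 0) * R := by
              exact mul_le_mul (ih hs' 0) ha (norm_nonneg a) (pow_nonneg hR0 _)
          _ = R ^ (Multiset.card s' + 1) := by rw [Nat.sub_zero, ← pow_succ]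
      · obtain ⟨n, rfl⟩ := Nat.exists_eq_add_of_le hj
        rw [Nat.add_comm 1 n]
        rw [coeff_mul_X_sub_C]
        have h1 : ‖P.coeff n‖ ≤ R ^ (Multiset.card s' - n) := ih hs' n
        have h2 : ‖P.coeff (n + 1) * a‖ ≤ R ^ (Multiset.card s' - n) := by
          rcases le_or_gt (n + 1) (Multiset.card s') with hle | hlt
          · rw [norm_mul]
            calc ‖P.coeff (n+1)‖ * ‖a‖ ≤ R ^ (Multiset.card s' - (n+1)) * R :=
                  mul_le_mul (ih hs' (n+1)) ha (norm_nonneg a) (pow_nonneg hR0 _)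
              _ = R ^ (Multiset.card s' - n) := by rw [← pow_succ]; congr 1; omega
          · have : P.coeff (n + 1) = 0 := coeff_eq_zero_of_natDegree_lt (by omega)
            rw [this, zero_mul, norm_zero]
            exact pow_nonneg hR0 _
        have hexp : Multiset.card (a ::ₘ s') - (n + 1) = Multiset.card s' - n := by
          rw [Multiset.card_cons]; omega
        rw [hexp]
        have := hna (P.coeff n) (-(P.coeff (n + 1) * a))
        simp only [norm_neg] at this
        calc ‖P.coeff n - P.coeff (n+1) * a‖ = ‖P.coeff n + -(P.coeff (n+1) * a)‖ := by
              rw [sub_eq_add_neg]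
          _ ≤ max ‖P.coeff n‖ ‖P.coeff (n+1) * a‖ := this
          _ ≤ R ^ (Multiset.card s' - n) := max_le h1 h2

end NA

lemma coeff_comp_C_mul_X {K : Type*} [CommRing K] (q : K[X]) (γ : K) (j : ℕ) :
    (q.comp (C γ * X)).coeff j = q.coeff j * γ ^ j := by
  induction q using Polynomial.induction_on' with
  | add r t hr ht => simp [add_comp, coeff_add, hr, ht, add_mul]
  | monomial n a =>
      rw [monomial_comp, mul_pow, ← C_pow, coeff_C_mul, coeff_C_mul, coeff_monomial, coeff_X_pow]
      rcases eq_or_ne n j with rfl | hne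
      · simp
      · simp [Ne.symm hne, hne]


lemma mult_lemma {k : Type*} [Field k] (G : k[X]) (hG0 : G ≠ 0) (a : k) (m : ℕ)
    (hdvd : (X - C a) ^ m ∣ derivative G) (hroot : G.eval a = 0)
    (hm : ((G.rootMultiplicity a : k)) ≠ 0) : m + 1 ≤ G.rootMultiplicity a := by
  by_contra hlt
  push_neg at hlt
  set μ := G.rootMultiplicity a with hμ
  have hpos : 0 < μ := (rootMultiplicity_pos hG0).mpr hroot
  set Q := G /ₘ (X - C a) ^ μ with hQdef
  have hfac : (X - C a) ^ μ * Q = G := pow_mul_divByMonic_rootMultiplicity_eq G a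
  have hQ : Q.eval a ≠ 0 := eval_divByMonic_pow_rootMultiplicity_ne_zero a hG0
  have hμ1 : μ - 1 + 1 = μ := Nat.succ_pred_eq_of_pos hpos
  have hder : derivative G = (X - C a) ^ (μ - 1) * (C (μ : k) * Q + (X - C a) * derivative Q) := by
    conv_lhs => rw [← hfac]
    rw [derivative_mul, derivative_pow, derivative_X_sub_C]
    have : (X - C a) ^ μ = (X - C a) ^ (μ - 1) * (X - C a) := by rw [← pow_succ, hμ1]
    rw [this]
    ring
  have hdvd2 : (X - C a) ^ (μ - 1) * (X - C a) ∣ derivative G := by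
    rw [← pow_succ, hμ1]
    exact dvd_trans (pow_dvd_pow _ (by omega)) hdvd
  rw [hder] at hdvd2
  have hXne : ((X : k[X]) - C a) ^ (μ - 1) ≠ 0 := pow_ne_zero _ (X_sub_C_ne_zero a)
  have h3 : (X - C a) ∣ C (μ : k) * Q + (X - C a) * derivative Q :=
    (mul_dvd_mul_iff_left hXne).mp hdvd2
  have h4 : (X - C a) ∣ C (μ : k) * Q := by
    have h4' : (X - C a) ∣ (X - C a) * derivative Q := Dvd.intro (derivative Q) rfl
    have := dvd_sub h3 h4'
    simpa using this
  have h5 := dvd_iff_isRoot.mp h4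
  simp only [IsRoot, eval_mul, eval_C] at h5
  rcases mul_eq_zero.mp h5 with h | h
  · exact hm h
  · exact hQ h

lemma no_such_G {k : Type*} [Field k] [DecidableEq k] (d : ℕ) (hd : 2 ≤ d) (G : k[X])
    (hGdeg : G.natDegree = d) (hG0 : G ≠ 0) (u : k) (hu : u ≠ 0)
    (t : Multiset k) (hcard : Multiset.card t = d - 1)
    (hder : derivative G = C u * (t.map fun a => X - C a).prod)
    (hroots : ∀ a ∈ t, G.eval a = 0) (hzero : G.eval 0 = 0)
    (hchar : ∀ n : ℕ, 0 < n → n ≤ d → (n : k) ≠ 0)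
    (a₀ : k) (ha₀ : a₀ ∈ t) (ha₀0 : a₀ ≠ 0) : False := by
  -- root multiplicities
  have hmultle : ∀ a : k, G.rootMultiplicity a ≤ d := by
    intro a
    calc G.rootMultiplicity a = G.roots.count a := (count_roots G).symm
      _ ≤ Multiset.card G.roots := Multiset.count_le_card a _
      _ ≤ G.natDegree := card_roots' G
      _ = d := hGdeg
  have hmult : ∀ a ∈ t, t.count a + 1 ≤ G.rootMultiplicity a := by
    intro a ha
    have hdvd : (X - C a) ^ (t.count a) ∣ derivative G := by
      rw [hder]
      refine Dvd.dvd.mul_left ?_ _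
      have hle : Multiset.replicate (t.count a) a ≤ t := Multiset.le_count_iff_replicate_le.mp le_rfl
      have : ((Multiset.replicate (t.count a) a).map fun b => X - C b).prod ∣
          (t.map fun b => X - C b).prod :=
        Multiset.prod_dvd_prod_of_le (Multiset.map_le_map hle)
      simpa [Multiset.map_replicate, Multiset.prod_replicate] using this
    have hmne : ((G.rootMultiplicity a : k)) ≠ 0 := by
      apply hchar
      · exact (rootMultiplicity_pos hG0).mpr (hroots a ha)
      · exact hmultle a
    exact mult_lemma G hG0 a (t.count a) hdvd (hroots a ha) hmne
  -- counting
  set T : Finset k := insert 0 t.toFinset with hT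
  have hub : ∑ a ∈ T, G.roots.count a ≤ d := by
    have h1 : ∑ a ∈ T, G.roots.count a ≤ ∑ a ∈ T ∪ G.roots.toFinset, G.roots.count a :=
      Finset.sum_le_sum_of_subset Finset.subset_union_left
    have h2 : ∑ a ∈ G.roots.toFinset, G.roots.count a = ∑ a ∈ T ∪ G.roots.toFinset, G.roots.count a := by
      apply Finset.sum_subset Finset.subset_union_right
      intro x _ hx
      exact Multiset.count_eq_zero_of_notMem (fun hmem => hx (Multiset.mem_toFinset.mpr hmem))
    calc ∑ a ∈ T, G.roots.count a ≤ ∑ a ∈ T ∪ G.roots.toFinset, G.roots.count a := h1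
      _ = ∑ a ∈ G.roots.toFinset, G.roots.count a := h2.symm
      _ = Multiset.card G.roots := Multiset.toFinset_sum_count_eq _
      _ ≤ G.natDegree := card_roots' G
      _ = d := hGdeg
  have hcnt : ∀ a ∈ t.toFinset, t.count a + 1 ≤ G.roots.count a := by
    intro a ha
    rw [count_roots]
    exact hmult a (Multiset.mem_toFinset.mp ha)
  have h0root : 1 ≤ G.roots.count 0 := by
    rw [count_roots]
    exact (rootMultiplicity_pos hG0).mpr hzero
  have hsum_t : ∑ a ∈ t.toFinset, (t.count a + 1) = (d - 1) + t.toFinset.card := by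
    rw [Finset.sum_add_distrib, Multiset.toFinset_sum_count_eq, hcard]
    simp
  by_cases h0 : (0 : k) ∈ t.toFinset
  · have hTeq : T = t.toFinset := by rw [hT, Finset.insert_eq_self.mpr h0]
    have hcard2 : 2 ≤ t.toFinset.card := by
      have : ({a₀, 0} : Finset k) ⊆ t.toFinset := by
        intro x hx
        rcases Finset.mem_insert.mp hx with rfl | hx
        · exact Multiset.mem_toFinset.mpr ha₀
        · rwa [Finset.mem_singleton.mp hx]
      calc 2 = ({a₀, 0} : Finset k).card := by rw [Finset.card_insert_of_notMem (by simpa using ha₀0), Finset.card_singleton]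
        _ ≤ t.toFinset.card := Finset.card_le_card this
    have hlb : (d - 1) + t.toFinset.card ≤ ∑ a ∈ T, G.roots.count a := by
      rw [hTeq, ← hsum_t]
      exact Finset.sum_le_sum hcnt
    omega
  · have hlb : 1 + ((d - 1) + t.toFinset.card) ≤ ∑ a ∈ T, G.roots.count a := by
      rw [hT, Finset.sum_insert h0, ← hsum_t]
      exact add_le_add h0root (Finset.sum_le_sum hcnt)
    have hne : t.toFinset.Nonempty := ⟨a₀, Multiset.mem_toFinset.mpr ha₀⟩
    have := Finset.card_pos.mpr hne
    omega


section Resid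
variable {K : Type*} [NormedField K]

/-- The ring of integers of `K`. -/
def ringO (hna : IsNonarchimedean (fun x : K => ‖x‖)) : Subring K where
  carrier := {x : K | ‖x‖ ≤ 1}
  mul_mem' := by
    intro a b ha hb
    simp only [Set.mem_setOf_eq] at *
    calc ‖a*b‖ = ‖a‖*‖b‖ := norm_mul a b
      _ ≤ 1*1 := mul_le_mul ha hb (norm_nonneg b) zero_le_one
      _ = 1 := one_mul 1
  one_mem' := by simp
  add_mem' := by
    intro a b ha hb
    simp only [Set.mem_setOf_eq] at *
    exact le_trans (hna a b) (max_le ha hb)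
  zero_mem' := by simp
  neg_mem' := by
    intro a ha
    simp only [Set.mem_setOf_eq] at *
    simpa using ha

lemma mem_ringO (hna : IsNonarchimedean (fun x : K => ‖x‖)) (x : K) :
    x ∈ ringO hna ↔ ‖x‖ ≤ 1 := Iff.rfl

/-- The maximal ideal of the ring of integers. -/
def idealM (hna : IsNonarchimedean (fun x : K => ‖x‖)) : Ideal (ringO hna) where
  carrier := {x : ringO hna | ‖(x : K)‖ < 1}
  add_mem' := by
    intro a b ha hb
    simp only [Set.mem_setOf_eq] at *
    calc ‖((a + b : ringO hna) : K)‖ = ‖(a : K) + (b : K)‖ := by norm_cast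
      _ ≤ max ‖(a:K)‖ ‖(b:K)‖ := hna _ _
      _ < 1 := max_lt ha hb
  zero_mem' := by simp
  smul_mem' := by
    intro r x hx
    simp only [Set.mem_setOf_eq, smul_eq_mul] at *
    calc ‖((r * x : ringO hna) : K)‖ = ‖(r:K)‖ * ‖(x:K)‖ := by push_cast; exact norm_mul _ _
      _ ≤ 1 * ‖(x:K)‖ := mul_le_mul_of_nonneg_right r.2 (norm_nonneg _)
      _ = ‖(x:K)‖ := one_mul _
      _ < 1 := hx

lemma mem_idealM (hna : IsNonarchimedean (fun x : K => ‖x‖)) (x : ringO hna) :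
    x ∈ idealM hna ↔ ‖(x : K)‖ < 1 := Iff.rfl

lemma isMaximal_idealM (hna : IsNonarchimedean (fun x : K => ‖x‖)) :
    (idealM hna).IsMaximal := by
  rw [Ideal.isMaximal_iff]
  constructor
  · intro h1
    have : ‖((1 : ringO hna) : K)‖ < 1 := (mem_idealM hna 1).mp h1
    simp at this
  · intro J x hIJ hxm hxJ
    have hx1 : ‖(x:K)‖ = 1 :=
      le_antisymm x.2 (not_lt.mp (fun h => hxm ((mem_idealM hna x).mpr h)))
    have hxne : (x:K) ≠ 0 := by
      intro h
      rw [h, norm_zero] at hx1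
      norm_num at hx1
    have hyO : ‖(x:K)⁻¹‖ ≤ 1 := by rw [norm_inv, hx1]; norm_num
    have hyx : (⟨(x:K)⁻¹, hyO⟩ : ringO hna) * x = 1 := by
      apply Subtype.ext
      push_cast
      exact inv_mul_cancel₀ hxne
    rw [← hyx]
    exact J.mul_mem_left _ hxJ

/-- The residue-field contradiction. -/
lemma residue_contradiction (hna : IsNonarchimedean (fun x : K => ‖x‖))
    (d : ℕ) (hd : 2 ≤ d)
    (hnat : ∀ n : ℕ, 0 < n → n ≤ d → ‖(n : K)‖ = 1)
    (g : K[X]) (hgnorm : ∀ j : ℕ, ‖g.coeff j‖ ≤ 1)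
    (hgd : g.coeff d = 1) (hgdeg : g.natDegree = d) (hgc0 : g.coeff 0 = 0)
    (tK : Multiset K) (hcard : Multiset.card tK = d - 1) (htK1 : ∀ x ∈ tK, ‖x‖ ≤ 1)
    (hder : derivative g = C (d : K) * (tK.map fun a => X - C a).prod)
    (hsmall : ∀ x ∈ tK, ‖g.eval x‖ < 1)
    (hone : (1 : K) ∈ tK) : False := by
  classical
  set O := ringO hna
  set m := idealM hna
  letI := isMaximal_idealM hna
  letI : Field (O ⧸ m) := Ideal.Quotient.field m
  set ψ : O →+* O ⧸ m := Ideal.Quotient.mk m with hψdef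
  have hψ0 : ∀ x : O, ψ x = 0 ↔ ‖(x:K)‖ < 1 := by
    intro x
    rw [hψdef]
    exact Ideal.Quotient.eq_zero_iff_mem.trans (mem_idealM hna x)
  -- package g over O
  have hsub : (↑g.coeffs : Set K) ⊆ (O : Set K) := by
    intro x hx
    obtain ⟨n, _, rfl⟩ := Polynomial.mem_coeffs_iff.mp hx
    exact hgnorm n
  set gO : O[X] := g.toSubring O hsub with hgOdef
  have hmapgO : gO.map O.subtype = g := g.map_toSubring O hsub
  have hgOcoeff : ∀ j : ℕ, ((gO.coeff j : O) : K) = g.coeff j := by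
    intro j
    exact g.coeff_toSubring O hsub
  set G : (O ⧸ m)[X] := gO.map ψ with hGdef2
  have hGcoeff : ∀ j : ℕ, G.coeff j = ψ (gO.coeff j) := fun j => coeff_map ψ j
  have hgOd : gO.coeff d = 1 := by
    apply Subtype.ext
    rw [hgOcoeff, hgd]
    norm_cast
  have hGd : G.coeff d = 1 := by rw [hGcoeff, hgOd, map_one]
  have honene : (1 : O ⧸ m) ≠ 0 := by
    rw [← map_one ψ]
    intro h
    rw [hψ0] at h
    simp at h
  have hGne : G ≠ 0 := fun h => honene (by rw [← hGd, h, coeff_zero])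
  have hGdeg : G.natDegree = d := by
    refine le_antisymm ?_ (le_natDegree_of_ne_zero (by rw [hGd]; exact honene))
    refine le_trans natDegree_map_le ?_
    rw [hgOdef, natDegree_toSubring, hgdeg]
  -- the critical points over O
  set tO : Multiset O := tK.attach.map (fun x => (⟨x.1, htK1 x.1 x.2⟩ : O)) with htOdef
  have htO : tO.map O.subtype = tK := by
    rw [htOdef, Multiset.map_map]
    exact Multiset.attach_map_val tK
  have hcardtO : Multiset.card tO = d - 1 := by
    rw [htOdef]
    simp [hcard]
  have hdO : ((d : O) : K) = (d : K) := by push_cast; ring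
  have hgOder : derivative gO = C (d : O) * (tO.map fun a => X - C a).prod := by
    apply Polynomial.map_injective O.subtype Subtype.coe_injective
    rw [← derivative_map, hmapgO, hder]
    rw [Polynomial.map_mul, map_C, Polynomial.map_multiset_prod, Multiset.map_map]
    have hmm : Multiset.map (Polynomial.map O.subtype ∘ fun a : O => X - C a) tO
        = Multiset.map (fun a => X - C a) tK := by
      have hcompmap : (Polynomial.map O.subtype ∘ fun a : O => X - C a)
          = (fun b : K => X - C b) ∘ O.subtype := by
        funext a
        simp
      rw [hcompmap, ← Multiset.map_map, htO]
    rw [hmm, map_natCast O.subtype d]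
  have hGder : derivative G
      = C (ψ (d:O)) * ((tO.map fun τ => ψ τ).map fun a => X - C a).prod := by
    rw [hGdef2, derivative_map, hgOder]
    rw [Polynomial.map_mul, map_C, Polynomial.map_multiset_prod]
    have hmm2 : (tO.map fun a : O => X - C a).map (Polynomial.map ψ)
        = (tO.map fun τ => ψ τ).map (fun a => X - C a) := by
      simp only [Multiset.map_map]
      apply Multiset.map_congr rfl
      intro τ _
      simp
    rw [hmm2]
  have hψd : ψ (d:O) ≠ 0 := by
    intro h
    rw [hψ0] at h
    rw [hdO, hnat d (by omega) le_rfl] at h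
    exact lt_irrefl 1 h
  have hevalmem : ∀ τ : O, (τ : K) ∈ tK → ‖((gO.eval τ : O) : K)‖ < 1 := by
    intro τ hτ
    have hcoe : O.subtype (gO.eval τ) = g.eval (O.subtype τ) := by
      rw [← hmapgO, eval_map, eval₂_at_apply]
    rw [show ((gO.eval τ : O) : K) = g.eval (τ : K) from hcoe]
    exact hsmall _ hτ
  have hGroots : ∀ a ∈ tO.map (fun τ => ψ τ), G.eval a = 0 := by
    intro a ha
    obtain ⟨τ, hτ, rfl⟩ := Multiset.mem_map.mp ha
    have heval : G.eval (ψ τ) = ψ (gO.eval τ) := by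
      rw [hGdef2, eval_map, eval₂_at_apply]
    rw [heval, hψ0]
    apply hevalmem
    rw [← htO]
    exact Multiset.mem_map_of_mem _ hτ
  have hGzero : G.eval 0 = 0 := by
    rw [← coeff_zero_eq_eval_zero, hGcoeff, hψ0]
    rw [hgOcoeff, hgc0, norm_zero]
    norm_num
  have hchark : ∀ n : ℕ, 0 < n → n ≤ d → ((n : O ⧸ m)) ≠ 0 := by
    intro n h1 h2 h
    rw [← map_natCast ψ n, hψ0] at h
    have hcoe : ((n : O) : K) = (n : K) := by push_cast; ring
    rw [hcoe, hnat n h1 h2] at h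
    exact lt_irrefl 1 h
  have honeq : (1 : O ⧸ m) ∈ tO.map (fun τ => ψ τ) := by
    have h1K : (1 : K) ∈ tO.map O.subtype := by rw [htO]; exact hone
    obtain ⟨τ, hτ, hτ1⟩ := Multiset.mem_map.mp h1K
    have hτeq : τ = 1 := Subtype.ext (by simpa using hτ1)
    exact Multiset.mem_map.mpr ⟨τ, hτ, by rw [hτeq, map_one]⟩
  have hcardt : Multiset.card (tO.map fun τ => ψ τ) = d - 1 := by
    rw [Multiset.card_map, hcardtO]
  exact no_such_G d hd G hGdeg hGne (ψ (d:O)) hψd _ hcardt hGder hGroots hGzero hchark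
    1 honeq honene

end Resid


/-- Let `d ≥ 2` be an integer and `p` a prime with `p > d`. A polynomial
`f ∈ P_d` is post-critically bounded iff every critical point `c` satisfies `|c| ≤ 1`. -/
theorem stmt_3 (K : Type*) [NormedField K] [IsAlgClosed K] [CompleteSpace K]
    (hna : IsNonarchimedean (fun x : K => ‖x‖))
    (p : ℕ) (hp : p.Prime)
    (hext : ∀ q : ℚ, ‖(q : K)‖ = (padicNorm p q : ℝ))
    (d : ℕ) (hd : 2 ≤ d) (hpd : d < p)
    (f : K[X]) (hmonic : f.Monic) (hdeg : f.natDegree = d) (hf0 : f.eval 0 = 0) :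
    (∀ c : K, f.derivative.eval c = 0 →
      ∃ B : ℝ, ∀ n : ℕ, ‖(fun z => f.eval z)^[n] c‖ ≤ B) ↔
    (∀ c : K, f.derivative.eval c = 0 → ‖c‖ ≤ 1) := by
  classical
  haveI : Fact p.Prime := ⟨hp⟩
  -- norms of small integers are 1
  have hne1 : ∀ n : ℕ, 0 < n → n ≤ d → ‖(n : K)‖ = 1 := by
    intro n hn hnd
    have hcast : ((n : ℚ) : K) = (n : K) := by push_cast; ring
    have hpn : padicNorm p (n : ℚ) = 1 := by
      rw [show ((n : ℚ)) = ((n : ℕ) : ℚ) by norm_cast]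
      rw [padicNorm.nat_eq_one_iff]
      intro hdvd
      have := Nat.le_of_dvd hn hdvd
      omega
    rw [← hcast, hext, hpn]
    norm_num
  have hdK : (d : K) ≠ 0 := by
    intro h
    have := hne1 d (by omega) le_rfl
    rw [h] at this
    simp at this
  -- derivative facts
  have hcoeffd : f.coeff d = 1 := by
    have := hmonic.coeff_natDegree
    rwa [hdeg] at this
  have hfd : f.derivative.coeff (d - 1) = (d : K) := by
    rw [coeff_derivative]
    rw [show d - 1 + 1 = d by omega, hcoeffd, one_mul]
    rw [show ((d - 1 : ℕ) : K) + 1 = ((d - 1 + 1 : ℕ) : K) by push_cast; ring]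
    rw [show d - 1 + 1 = d by omega]
  have hf'ne : f.derivative ≠ 0 := by
    intro h
    apply hdK
    rw [← hfd, h, coeff_zero]
  have hdegf' : f.derivative.natDegree = d - 1 := by
    refine le_antisymm ?_ (le_natDegree_of_ne_zero (by rw [hfd]; exact hdK))
    have := natDegree_derivative_le f
    omega
  have hlcf' : f.derivative.leadingCoeff = (d : K) := by
    rw [leadingCoeff, hdegf', hfd]
  set s : Multiset K := f.derivative.roots with hs
  have hcards : Multiset.card s = d - 1 := by
    rw [hs]
    rw [splits_iff_card_roots.mp (IsAlgClosed.splits f.derivative), hdegf']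
  have hfact : f.derivative = C (d : K) * (s.map fun c => X - C c).prod := by
    conv_lhs => rw [(IsAlgClosed.splits f.derivative).eq_prod_roots]
    rw [hlcf']
  have hmem_s : ∀ c : K, c ∈ s ↔ f.derivative.eval c = 0 := by
    intro c
    rw [hs, mem_roots hf'ne]
    rfl
  have hcoeff0 : f.coeff 0 = 0 := by rw [coeff_zero_eq_eval_zero]; exact hf0
  -- coefficient bounds
  have hcoeffB : ∀ R : ℝ, 1 ≤ R → (∀ c ∈ s, ‖c‖ ≤ R) →
      ∀ k : ℕ, 1 ≤ k → ‖f.coeff k‖ ≤ R ^ (d - k) := by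
    intro R hR hsR k hk
    rcases le_or_gt k d with hkd | hkd
    · have h1 : f.derivative.coeff (k - 1) = f.coeff k * (k : K) := by
        rw [coeff_derivative]
        rw [show k - 1 + 1 = k by omega]
        rw [show ((k - 1 : ℕ) : K) + 1 = ((k - 1 + 1 : ℕ) : K) by push_cast; ring]
        rw [show k - 1 + 1 = k by omega]
      have h2 : ‖f.derivative.coeff (k-1)‖ ≤ R ^ (d - k) := by
        rw [hfact, coeff_C_mul, norm_mul, hne1 d (by omega) le_rfl, one_mul]
        have := coeff_prod_X_sub_C_le hna R hR s hsR (k-1)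
        rwa [hcards, show (d - 1) - (k - 1) = d - k by omega] at this
      calc ‖f.coeff k‖ = ‖f.coeff k‖ * ‖(k:K)‖ := by rw [hne1 k hk (by omega), mul_one]
        _ = ‖f.derivative.coeff (k-1)‖ := by rw [h1, norm_mul]
        _ ≤ R ^ (d-k) := h2
    · rw [coeff_eq_zero_of_natDegree_lt (by omega : f.natDegree < k)]
      rw [norm_zero]
      positivity
  constructor
  · -- hard direction: PCB → critical points in unit disk
    intro hbdd
    by_contra hcon
    push_neg at hcon
    obtain ⟨c₀, hc₀root, hc₀⟩ := hcon
    have hc₀s : c₀ ∈ s := (hmem_s c₀).mpr hc₀root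
    set Fs : Finset ℝ := (s.map fun c => ‖c‖).toFinset with hFs
    have hFsne : Fs.Nonempty := ⟨‖c₀‖, Multiset.mem_toFinset.mpr (Multiset.mem_map_of_mem _ hc₀s)⟩
    set R : ℝ := Fs.max' hFsne with hRdef
    have hRmax : ∀ c ∈ s, ‖c‖ ≤ R := fun c hc =>
      Finset.le_max' _ _ (Multiset.mem_toFinset.mpr (Multiset.mem_map_of_mem _ hc))
    have hR1 : 1 < R := lt_of_lt_of_le hc₀ (hRmax c₀ hc₀s)
    have hR0 : 0 < R := lt_trans one_pos hR1
    obtain ⟨γ, hγs, hγR⟩ : ∃ γ ∈ s, ‖γ‖ = R := by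
      obtain ⟨γ, hγ, h⟩ := Multiset.mem_map.mp (Multiset.mem_toFinset.mp (Fs.max'_mem hFsne))
      exact ⟨γ, hγ, h⟩
    have hγ0 : γ ≠ 0 := by
      intro h
      rw [h, norm_zero] at hγR
      linarith
    have hcoeffR := hcoeffB R hR1.le hRmax
    -- escape
    have hescape : ∀ z : K, R < ‖z‖ → ‖f.eval z‖ = ‖z‖ ^ d := by
      intro z hz
      have hz1 : 1 < ‖z‖ := lt_trans hR1 hz
      have hz0 : 0 < ‖z‖ := lt_trans one_pos hz1
      have heq : f.eval z = z ^ d + ∑ i ∈ Finset.range d, f.coeff i * z ^ i := by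
        have h := eval_eq_sum_range' (n := d + 1) (by omega : f.natDegree < d + 1) z
        rw [h, Finset.sum_range_succ, hcoeffd, one_mul, add_comm]
      rw [heq]
      have hEbound : ‖∑ i ∈ Finset.range d, f.coeff i * z ^ i‖ ≤ R * ‖z‖ ^ (d - 1) := by
        apply na_finset_sum_le hna _ _ (by positivity)
        intro i hi
        have hid : i < d := Finset.mem_range.mp hi
        rcases Nat.eq_zero_or_pos i with rfl | hipos
        · rw [hcoeff0, zero_mul, norm_zero]
          positivity
        · rw [norm_mul, norm_pow]
          have hsplit : R ^ (d - i) = R * R ^ (d - i - 1) := by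
            rw [← pow_succ', show d - i - 1 + 1 = d - i by omega]
          calc ‖f.coeff i‖ * ‖z‖ ^ i ≤ R ^ (d - i) * ‖z‖ ^ i :=
                mul_le_mul_of_nonneg_right (hcoeffR i hipos) (by positivity)
            _ = R * (R ^ (d - i - 1) * ‖z‖ ^ i) := by rw [hsplit]; ring
            _ ≤ R * (‖z‖ ^ (d - i - 1) * ‖z‖ ^ i) := by
                gcongr
            _ = R * ‖z‖ ^ (d - 1) := by rw [← pow_add]; congr 2; omega
      have hlt : R * ‖z‖ ^ (d-1) < ‖z‖ ^ d := by
        calc R * ‖z‖^(d-1) < ‖z‖ * ‖z‖^(d-1) := by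
              have hzp : (0:ℝ) < ‖z‖ ^ (d-1) := by positivity
              nlinarith
          _ = ‖z‖ ^ d := by rw [← pow_succ']; congr 1; omega
      rw [na_add_eq_left hna (lt_of_le_of_lt hEbound (by rw [norm_pow]; exact hlt))]
      exact norm_pow z d
    -- growth
    have hgrow : ∀ z : K, R < ‖z‖ → ∀ n : ℕ,
        R < ‖(fun w => f.eval w)^[n] z‖ ∧ ‖z‖ ^ (n+1) ≤ ‖(fun w => f.eval w)^[n] z‖ := by
      intro z hz
      have hz1 : 1 < ‖z‖ := lt_trans hR1 hz
      intro n
      induction n with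
      | zero => exact ⟨by simpa using hz, by simpa using le_refl ‖z‖⟩
      | succ n ih =>
          obtain ⟨h1, h2⟩ := ih
          set w := (fun w => f.eval w)^[n] z with hw
          have hw1 : 1 < ‖w‖ := lt_trans hR1 h1
          rw [Function.iterate_succ_apply']
          have hfw : ‖f.eval w‖ = ‖w‖ ^ d := hescape w h1
          constructor
          · rw [hfw]
            calc R < ‖w‖ := h1
              _ ≤ ‖w‖ ^ d := le_self_pow₀ hw1.le (by omega)
          · rw [hfw]
            calc ‖z‖ ^ (n+1+1) = ‖z‖^(n+1) * ‖z‖ := by rw [pow_succ]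
              _ ≤ ‖w‖ * ‖w‖ := by
                  have hza : ‖z‖ ≤ ‖w‖ := le_trans (le_self_pow₀ hz1.le (by omega)) h2
                  nlinarith [norm_nonneg z, norm_nonneg w]
              _ = ‖w‖ ^ 2 := (sq ‖w‖).symm
              _ ≤ ‖w‖ ^ d := pow_le_pow_right₀ hw1.le hd
    -- all critical orbits stay in the closed ball of radius R
    have hbddR : ∀ c ∈ s, ∀ n : ℕ, ‖(fun w => f.eval w)^[n] c‖ ≤ R := by
      intro c hc
      by_contra hcontra
      push_neg at hcontra
      obtain ⟨n, hn⟩ := hcontra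
      obtain ⟨B, hB⟩ := hbdd c ((hmem_s c).mp hc)
      set w := (fun w => f.eval w)^[n] c with hw
      have hw1 : 1 < ‖w‖ := lt_trans hR1 hn
      obtain ⟨mexp, hm⟩ := pow_unbounded_of_one_lt B hw1
      have hgw := (hgrow w hn mexp).2
      have hle : ‖(fun w => f.eval w)^[mexp] w‖ ≤ B := by
        rw [hw, ← Function.iterate_add_apply]
        exact hB _
      have hBB : B < ‖(fun w => f.eval w)^[mexp] w‖ := by
        refine lt_of_lt_of_le hm (le_trans ?_ hgw)
        exact pow_le_pow_right₀ hw1.le (by omega)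
      linarith
    have hfc_le : ∀ c ∈ s, ‖f.eval c‖ ≤ R := by
      intro c hc
      have := hbddR c hc 1
      simpa using this
    -- the rescaled polynomial g
    set g : K[X] := C (γ⁻¹ ^ d) * (f.comp (C γ * X)) with hgdef
    have hgcoeff : ∀ j : ℕ, g.coeff j = f.coeff j * γ ^ j * γ⁻¹ ^ d := by
      intro j
      rw [hgdef, coeff_C_mul, coeff_comp_C_mul_X]
      ring
    have hgd : g.coeff d = 1 := by
      rw [hgcoeff, hcoeffd, one_mul, inv_pow]
      exact mul_inv_cancel₀ (pow_ne_zero d hγ0)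
    have hgc0 : g.coeff 0 = 0 := by rw [hgcoeff, hcoeff0]; ring
    have hgc_hi : ∀ j : ℕ, d < j → g.coeff j = 0 := by
      intro j hj
      rw [hgcoeff, coeff_eq_zero_of_natDegree_lt (by omega : f.natDegree < j)]
      ring
    have hgnatdeg : g.natDegree = d :=
      le_antisymm (natDegree_le_iff_coeff_eq_zero.mpr fun N hN => hgc_hi N hN)
        (le_natDegree_of_ne_zero (by rw [hgd]; exact one_ne_zero))
    have hgnorm : ∀ j : ℕ, ‖g.coeff j‖ ≤ 1 := by
      intro j
      rcases Nat.eq_zero_or_pos j with rfl | hj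
      · rw [hgc0, norm_zero]; norm_num
      rcases le_or_gt j d with hjd | hjd
      · rw [hgcoeff, norm_mul, norm_mul, norm_pow, norm_pow, norm_inv, hγR]
        have h1 : ‖f.coeff j‖ ≤ R ^ (d - j) := hcoeffR j hj
        have h2 : R ^ (d-j) * R ^ j = R ^ d := by rw [← pow_add]; congr 1; omega
        calc ‖f.coeff j‖ * R ^ j * (R⁻¹) ^ d ≤ R ^ (d-j) * R ^ j * (R⁻¹) ^ d := by
              gcongr
          _ = 1 := by rw [h2, inv_pow]; exact mul_inv_cancel₀ (pow_ne_zero d (ne_of_gt hR0))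
      · rw [hgc_hi j hjd, norm_zero]; norm_num
    have hgeval : ∀ w : K, g.eval w = γ⁻¹ ^ d * f.eval (γ * w) := by
      intro w
      rw [hgdef]
      simp [eval_comp]
    have hgsmall : ∀ c ∈ s, ‖g.eval (c / γ)‖ < 1 := by
      intro c hc
      rw [hgeval, show γ * (c / γ) = c from by field_simp]
      rw [norm_mul, norm_pow, norm_inv, hγR]
      have h1 : ‖f.eval c‖ ≤ R := hfc_le c hc
      have hRd : R < R ^ d := by
        calc R = R ^ 1 := (pow_one R).symm
          _ < R ^ d := pow_lt_pow_right₀ hR1 (by omega)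
      have hRdpos : (0:ℝ) < R ^ d := by positivity
      calc (R⁻¹) ^ d * ‖f.eval c‖ ≤ (R⁻¹) ^ d * R := by
            have hinv : (0:ℝ) ≤ (R⁻¹) ^ d := by positivity
            nlinarith
        _ = R / R ^ d := by rw [inv_pow]; field_simp
        _ < 1 := (div_lt_one hRdpos).mpr hRd
    -- derivative of g
    have hgder : derivative g = C (d:K) * ((s.map fun c => c / γ).map fun a => X - C a).prod := by
      have hcomp : ∀ c ∈ s, (X - C c).comp (C γ * X) = C γ * (X - C (c/γ)) := by
        intro c _
        rw [sub_comp, X_comp, C_comp, mul_sub, ← C_mul,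
          show γ * (c / γ) = c from by field_simp]
      have hmaps : (s.map fun c => X - C c).map (fun q : K[X] => q.comp (C γ * X))
          = s.map fun c => C γ * (X - C (c/γ)) := by
        rw [Multiset.map_map]
        exact Multiset.map_congr rfl (fun c hc => hcomp c hc)
      have hstep : f.derivative.comp (C γ * X)
          = C (d:K) * (C γ ^ (d-1) * ((s.map fun c => c / γ).map fun a => X - C a).prod) := by
        rw [hfact, mul_comp, C_comp, multiset_prod_comp, hmaps, Multiset.prod_map_mul]
        congr 2
        · rw [Multiset.map_const', Multiset.prod_replicate, hcards]
        · rw [Multiset.map_map]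
          rfl
      rw [hgdef, derivative_C_mul, derivative_comp]
      have hder2 : derivative (C γ * X) = C γ := by
        rw [derivative_C_mul, derivative_X, mul_one]
      rw [hder2, hstep]
      rw [← C_pow]
      set Q := ((s.map fun c => c / γ).map fun a => X - C a).prod
      have hconst : γ⁻¹ ^ d * (γ * γ ^ (d-1)) = 1 := by
        rw [← pow_succ', show d - 1 + 1 = d by omega]
        rw [inv_pow]
        exact inv_mul_cancel₀ (pow_ne_zero d hγ0)
      calc C (γ⁻¹ ^ d) * (C γ * (C (d:K) * (C (γ ^ (d-1)) * Q)))
          = C (γ⁻¹ ^ d * (γ * γ ^ (d-1))) * (C (d:K) * Q) := by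
            rw [C_mul, C_mul]
            ring
        _ = C (d:K) * Q := by rw [hconst, C_1, one_mul]
    -- conclude by the residue-field argument
    have hcardtK : Multiset.card (s.map fun c => c / γ) = d - 1 := by
      rw [Multiset.card_map, hcards]
    have htK1 : ∀ x ∈ (s.map fun c => c / γ), ‖x‖ ≤ 1 := by
      intro x hx
      obtain ⟨c, hc, rfl⟩ := Multiset.mem_map.mp hx
      rw [norm_div, hγR]
      exact (div_le_one hR0).mpr (hRmax c hc)
    have hsmall : ∀ x ∈ (s.map fun c => c / γ), ‖g.eval x‖ < 1 := by
      intro x hx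
      obtain ⟨c, hc, rfl⟩ := Multiset.mem_map.mp hx
      exact hgsmall c hc
    have hone : (1 : K) ∈ (s.map fun c => c / γ) :=
      Multiset.mem_map.mpr ⟨γ, hγs, div_self hγ0⟩
    exact residue_contradiction hna d hd hne1 g hgnorm hgd hgnatdeg hgc0
      (s.map fun c => c / γ) hcardtK htK1 hgder hsmall hone
  · -- easy direction
    intro hcrit c hc
    have hco : ∀ k : ℕ, ‖f.coeff k‖ ≤ 1 := by
      intro k
      rcases Nat.eq_zero_or_pos k with rfl | hk
      · rw [hcoeff0, norm_zero]; norm_num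
      · have := hcoeffB 1 le_rfl (fun c' hc' => hcrit c' ((hmem_s c').mp hc')) k hk
        rwa [one_pow] at this
    have heval1 : ∀ z : K, ‖z‖ ≤ 1 → ‖f.eval z‖ ≤ 1 := by
      intro z hz
      rw [eval_eq_sum_range]
      apply na_finset_sum_le hna _ _ zero_le_one
      intro i _
      rw [norm_mul, norm_pow]
      calc ‖f.coeff i‖ * ‖z‖ ^ i ≤ 1 * 1 ^ i :=
            mul_le_mul (hco i) (pow_le_pow_left₀ (norm_nonneg z) hz i) (by positivity) zero_le_one
        _ = 1 := by norm_num
    refine ⟨1, ?_⟩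
    intro n
    induction n with
    | zero => simpa using hcrit c hc
    | succ n ih =>
        rw [Function.iterate_succ_apply']
        exact heval1 _ ih
end

section
/- Let p be a prime, k ≥ 1 an integer, and d = p^k. A polynomial f ∈ P_d is post-critically bounded if and only if every critical point c of f satisfies |c| ≤ 1. -/
open Polynomial

section Helpers

variable {K : Type*} [NormedField K]

private lemma nonarch_multiset_sum (hna : IsNonarchimedean (fun x : K => ‖x‖))
    {B : ℝ} (hB : 0 ≤ B) (T : Multiset K) (h : ∀ x ∈ T, ‖x‖ ≤ B) : ‖T.sum‖ ≤ B := by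
  induction T using Multiset.induction_on with
  | empty => simpa using hB
  | cons a s ih =>
    rw [Multiset.sum_cons]
    exact le_trans (hna a s.sum)
      (max_le (h a (Multiset.mem_cons_self a s))
        (ih fun x hx => h x (Multiset.mem_cons_of_mem hx)))

private lemma nonarch_finset_sum (hna : IsNonarchimedean (fun x : K => ‖x‖))
    {ι : Type*} {B : ℝ} (hB : 0 ≤ B) (s : Finset ι) (F : ι → K)
    (h : ∀ i ∈ s, ‖F i‖ ≤ B) : ‖∑ i ∈ s, F i‖ ≤ B := by
  classical
  have : (∑ i ∈ s, F i) = (s.val.map F).sum := rfl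
  rw [this]
  apply nonarch_multiset_sum hna hB
  intro x hx
  rw [Multiset.mem_map] at hx
  obtain ⟨i, hi, rfl⟩ := hx
  exact h i hi

private lemma nonarch_prod_le (t : Multiset K) {r : ℝ} (hr : 0 ≤ r)
    (h : ∀ x ∈ t, ‖x‖ ≤ r) : ‖t.prod‖ ≤ r ^ Multiset.card t := by
  induction t using Multiset.induction_on with
  | empty => simp
  | cons a s ih =>
    rw [Multiset.prod_cons, Multiset.card_cons, norm_mul, pow_succ]
    rw [mul_comm (r ^ Multiset.card s) r]
    exact mul_le_mul (h a (Multiset.mem_cons_self a s))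
      (ih fun x hx => h x (Multiset.mem_cons_of_mem hx)) (norm_nonneg _) hr

private lemma nonarch_esymm_le (hna : IsNonarchimedean (fun x : K => ‖x‖))
    (T : Multiset K) {r : ℝ} (hr : 0 ≤ r) (h : ∀ x ∈ T, ‖x‖ ≤ r) (m : ℕ) :
    ‖T.esymm m‖ ≤ r ^ m := by
  refine nonarch_multiset_sum hna (pow_nonneg hr m) _ ?_
  intro x hx
  rw [Multiset.mem_map] at hx
  obtain ⟨t, ht, rfl⟩ := hx
  rw [Multiset.mem_powersetCard] at ht
  calc ‖t.prod‖ ≤ r ^ Multiset.card t :=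
        nonarch_prod_le t hr (fun x hx => h x (Multiset.mem_of_le ht.1 hx))
    _ = r ^ m := by rw [ht.2]

private lemma nonarch_coeff_le (hna : IsNonarchimedean (fun x : K => ‖x‖))
    {g : K[X]} (hcard : Multiset.card g.roots = g.natDegree)
    {r : ℝ} (hr : 0 ≤ r) (h : ∀ x ∈ g.roots, ‖x‖ ≤ r) {i : ℕ} (hi : i ≤ g.natDegree) :
    ‖g.coeff i‖ ≤ ‖g.leadingCoeff‖ * r ^ (g.natDegree - i) := by
  rw [Polynomial.coeff_eq_esymm_roots_of_card hcard hi, norm_mul, norm_mul, norm_pow,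
    norm_neg, norm_one, one_pow, mul_one]
  exact mul_le_mul_of_nonneg_left (nonarch_esymm_le hna _ hr h _) (norm_nonneg _)

private lemma nonarch_add_eq (hna : IsNonarchimedean (fun x : K => ‖x‖))
    {x y : K} (h : ‖y‖ < ‖x‖) : ‖x + y‖ = ‖x‖ := by
  refine le_antisymm (le_trans (hna x y) (max_le le_rfl h.le)) ?_
  have h2 : ‖x‖ ≤ max ‖x + y‖ ‖y‖ := by
    have h3 := hna (x + y) (-y)
    simpa using h3
  rcases le_max_iff.mp h2 with h4 | h4
  · exact h4
  · exact absurd h4 (not_le.mpr h)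

end Helpers

/-- Let `p` be a prime, `k ≥ 1`, and `d = p^k`. A polynomial `f ∈ P_d`
is post-critically bounded iff every critical point `c` satisfies `|c| ≤ 1`. -/
theorem stmt_4 (K : Type*) [NormedField K] [IsAlgClosed K] [CompleteSpace K]
    (hna : IsNonarchimedean (fun x : K => ‖x‖))
    (p : ℕ) (hp : p.Prime)
    (hext : ∀ q : ℚ, ‖(q : K)‖ = (padicNorm p q : ℝ))
    (k : ℕ) (hk : 1 ≤ k)
    (f : K[X]) (hmonic : f.Monic) (hdeg : f.natDegree = p ^ k) (hf0 : f.eval 0 = 0) :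
    (∀ c : K, f.derivative.eval c = 0 →
      ∃ B : ℝ, ∀ n : ℕ, ‖(fun z => f.eval z)^[n] c‖ ≤ B) ↔
    (∀ c : K, f.derivative.eval c = 0 → ‖c‖ ≤ 1) := by
  classical
  haveI : Fact p.Prime := ⟨hp⟩
  have hp1 : (1:ℝ) < p := by exact_mod_cast hp.one_lt
  have hppos : (0:ℝ) < p := lt_trans one_pos hp1
  have hnormnat : ∀ n : ℕ, n ≠ 0 → ‖(n:K)‖ = (p:ℝ) ^ (-(padicValNat p n : ℤ)) := by
    intro n hn
    have h1 : ((n:ℚ) : K) = (n : K) := by push_cast; ring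
    rw [← h1, hext, padicNorm.eq_zpow_of_nonzero (by exact_mod_cast hn)]
    rw [← padicValRat_of_nat]
    push_cast
    ring
  haveI : CharZero K := by
    refine charZero_of_inj_zero fun n hn => ?_
    by_contra h0
    have h1 := hnormnat n h0
    rw [hn, norm_zero] at h1
    exact absurd h1.symm (ne_of_gt (zpow_pos hppos _))
  set d := p ^ k with hd
  have hd2 : 2 ≤ d := le_trans hp.two_le (Nat.le_self_pow (by omega) p)
  have hdK : ((d:K)) ≠ 0 := Nat.cast_ne_zero.mpr (by positivity)
  set g := f.derivative with hg
  have hsucc : d - 1 + 1 = d := by omega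
  have hgc : g.coeff (d - 1) = (d : K) := by
    rw [hg, Polynomial.coeff_derivative]
    have h1 : f.coeff (d - 1 + 1) = 1 := by rw [hsucc, ← hdeg]; exact hmonic.coeff_natDegree
    rw [h1, one_mul]
    exact_mod_cast congrArg (fun n : ℕ => (n : K)) hsucc
  have hgle : g.natDegree ≤ d - 1 := by
    rw [hg]
    exact le_trans (Polynomial.natDegree_derivative_le f) (by rw [hdeg])
  have hgne : g.coeff (d - 1) ≠ 0 := by rw [hgc]; exact hdK
  have hgdeg : g.natDegree = d - 1 := le_antisymm hgle (Polynomial.le_natDegree_of_ne_zero hgne)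
  have hg0 : g ≠ 0 := fun h => hgne (by simp [h])
  have hlead : g.leadingCoeff = (d:K) := by rw [Polynomial.leadingCoeff, hgdeg, hgc]
  have hcard : Multiset.card g.roots = g.natDegree :=
    Polynomial.splits_iff_card_roots.mp (IsAlgClosed.splits g)
  have hc0 : f.coeff 0 = 0 := by rw [Polynomial.coeff_zero_eq_eval_zero, hf0]
  have hnormd : ‖(d:K)‖ = (p:ℝ) ^ (-(k:ℤ)) := by
    rw [hnormnat d (by omega), hd, padicValNat.prime_pow]
  -- key coefficient bound
  have key : ∀ r : ℝ, 1 ≤ r → (∀ c : K, g.eval c = 0 → ‖c‖ ≤ r) →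
      ∀ i : ℕ, 1 ≤ i → i < d → ‖f.coeff i‖ ≤ (p:ℝ)⁻¹ * r ^ (d - i) := by
    intro r hr1 hroots i hi1 hid
    have hr0 : (0:ℝ) ≤ r := le_trans zero_le_one hr1
    have hrootmem : ∀ x ∈ g.roots, ‖x‖ ≤ r := fun x hx =>
      hroots x ((Polynomial.mem_roots hg0).mp hx)
    have hile : i - 1 ≤ g.natDegree := by rw [hgdeg]; omega
    have hcoeffg : ‖g.coeff (i-1)‖ ≤ ‖(d:K)‖ * r ^ (d - i) := by
      have h1 := nonarch_coeff_le hna hcard hr0 hrootmem hile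
      rwa [hlead, hgdeg, (by omega : d - 1 - (i-1) = d - i)] at h1
    have hi0 : i - 1 + 1 = i := by omega
    have hrel : ‖g.coeff (i-1)‖ = ‖f.coeff i‖ * ‖(i:K)‖ := by
      rw [hg, Polynomial.coeff_derivative, norm_mul, hi0]
      congr 2
      exact_mod_cast congrArg (fun n : ℕ => (n : K)) hi0
    have hvi : padicValNat p i < k := by
      have h1 : p ^ padicValNat p i ≤ i := Nat.le_of_dvd (by omega) pow_padicValNat_dvd
      have h2 : p ^ padicValNat p i < p ^ k := lt_of_le_of_lt h1 (by omega)
      exact (Nat.pow_lt_pow_iff_right hp.one_lt).mp h2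
    have hnormi : ‖(i:K)‖ = (p:ℝ) ^ (-(padicValNat p i : ℤ)) := hnormnat i (by omega)
    have hratio : ‖(d:K)‖ ≤ (p:ℝ)⁻¹ * ‖(i:K)‖ := by
      rw [hnormd, hnormi, ← zpow_neg_one, ← zpow_add₀ (ne_of_gt hppos)]
      exact zpow_le_zpow_right₀ hp1.le (by omega)
    have hipos : (0:ℝ) < ‖(i:K)‖ := by
      rw [hnormi]; positivity
    have h3 : ‖f.coeff i‖ * ‖(i:K)‖ ≤ ((p:ℝ)⁻¹ * r ^ (d-i)) * ‖(i:K)‖ := by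
      rw [← hrel]
      calc ‖g.coeff (i-1)‖ ≤ ‖(d:K)‖ * r ^ (d-i) := hcoeffg
        _ ≤ ((p:ℝ)⁻¹ * ‖(i:K)‖) * r ^ (d-i) := by
            exact mul_le_mul_of_nonneg_right hratio (by positivity)
        _ = ((p:ℝ)⁻¹ * r ^ (d-i)) * ‖(i:K)‖ := by ring
    exact le_of_mul_le_mul_right h3 hipos
  have hcd : f.coeff d = 1 := by rw [← hdeg]; exact hmonic.coeff_natDegree
  constructor
  · -- bounded orbits → all critical points in unit disk
    intro hbdd c hc
    by_contra hcg
    push_neg at hcg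
    have hcroot : c ∈ g.roots.toFinset := by
      rw [Multiset.mem_toFinset, Polynomial.mem_roots hg0]
      exact hc
    obtain ⟨m, hm, hmax⟩ := g.roots.toFinset.exists_max_image (fun x => ‖x‖) ⟨c, hcroot⟩
    set r := ‖m‖ with hr
    have hr1 : 1 < r := lt_of_lt_of_le hcg (hmax c hcroot)
    have hroots : ∀ x : K, g.eval x = 0 → ‖x‖ ≤ r := fun x hx =>
      hmax x (Multiset.mem_toFinset.mpr ((Polynomial.mem_roots hg0).mpr hx))
    have hcoef := key r hr1.le hroots
    have hescape : ∀ z : K, r ≤ ‖z‖ → ‖z‖ ^ d ≤ ‖f.eval z‖ := by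
      intro z hz
      have hz1 : 1 ≤ ‖z‖ := le_trans hr1.le hz
      have heval : f.eval z = z ^ d + ∑ j ∈ Finset.range d, f.coeff j * z ^ j := by
        rw [Polynomial.eval_eq_sum_range, hdeg, Finset.sum_range_succ, hcd, one_mul, add_comm]
      have hT : ‖∑ j ∈ Finset.range d, f.coeff j * z ^ j‖ ≤ (p:ℝ)⁻¹ * ‖z‖ ^ d := by
        apply nonarch_finset_sum hna (by positivity)
        intro j hj
        rw [Finset.mem_range] at hj
        rcases Nat.eq_zero_or_pos j with h0 | h1
        · subst h0
          rw [hc0]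
          simp only [zero_mul, norm_zero]
          positivity
        · rw [norm_mul, norm_pow]
          calc ‖f.coeff j‖ * ‖z‖ ^ j ≤ ((p:ℝ)⁻¹ * r ^ (d-j)) * ‖z‖ ^ j := by
                exact mul_le_mul_of_nonneg_right (hcoef j h1 hj) (by positivity)
            _ ≤ ((p:ℝ)⁻¹ * ‖z‖ ^ (d-j)) * ‖z‖ ^ j := by
                have h4 := pow_le_pow_left₀ (by linarith : (0:ℝ) ≤ r) hz (d - j)
                exact mul_le_mul_of_nonneg_right
                  (mul_le_mul_of_nonneg_left h4 (by positivity)) (by positivity)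
            _ = (p:ℝ)⁻¹ * ‖z‖ ^ d := by
                rw [mul_assoc, ← pow_add, (by omega : d - j + j = d)]
      have hTlt : ‖∑ j ∈ Finset.range d, f.coeff j * z ^ j‖ < ‖z ^ d‖ := by
        rw [norm_pow]
        calc ‖∑ j ∈ Finset.range d, f.coeff j * z ^ j‖ ≤ (p:ℝ)⁻¹ * ‖z‖ ^ d := hT
          _ < 1 * ‖z‖ ^ d := by
              apply mul_lt_mul_of_pos_right (inv_lt_one_of_one_lt₀ hp1)
              positivity
          _ = ‖z‖ ^ d := one_mul _
      rw [heval, nonarch_add_eq hna hTlt, norm_pow]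
    obtain ⟨B, hB⟩ := hbdd m ((Polynomial.mem_roots hg0).mp (Multiset.mem_toFinset.mp hm))
    have hgrow : ∀ n : ℕ, r ^ (n+1) ≤ ‖(fun z => f.eval z)^[n] m‖ := by
      intro n
      induction n with
      | zero => simpa [hr] using le_refl r
      | succ n ih =>
        rw [Function.iterate_succ_apply']
        set x := (fun z => f.eval z)^[n] m with hx
        have hxr : r ≤ ‖x‖ := le_trans (le_self_pow₀ hr1.le (by omega)) ih
        have hx1 : 1 ≤ ‖x‖ := le_trans hr1.le hxr
        calc r ^ (n+1+1) = r ^ (n+1) * r := by ring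
          _ ≤ ‖x‖ * ‖x‖ := mul_le_mul ih hxr (by linarith) (norm_nonneg _)
          _ = ‖x‖ ^ 2 := (sq ‖x‖).symm
          _ ≤ ‖x‖ ^ d := pow_le_pow_right₀ hx1 hd2
          _ ≤ ‖f.eval x‖ := hescape x hxr
    obtain ⟨n, hn⟩ := pow_unbounded_of_one_lt B hr1
    have h5 : r ^ n ≤ r ^ (n+1) := pow_le_pow_right₀ hr1.le (Nat.le_succ n)
    exact absurd (hB n) (not_le.mpr (lt_of_lt_of_le hn (le_trans h5 (hgrow n))))
  · -- critical points in unit disk → bounded orbits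
    intro hcrit c hc
    refine ⟨1, ?_⟩
    have hcoef := key 1 le_rfl hcrit
    have hstep : ∀ z : K, ‖z‖ ≤ 1 → ‖f.eval z‖ ≤ 1 := by
      intro z hz
      rw [Polynomial.eval_eq_sum_range]
      apply nonarch_finset_sum hna zero_le_one
      intro j hj
      rw [Finset.mem_range, hdeg] at hj
      rw [norm_mul, norm_pow]
      have hzj : ‖z‖ ^ j ≤ 1 := pow_le_one₀ (norm_nonneg z) hz
      rcases Nat.eq_zero_or_pos j with h0 | h1
      · subst h0; rw [hc0]; simp
      rcases eq_or_lt_of_le (Nat.lt_succ_iff.mp hj) with hend | hmid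
      · rw [hend] at hzj ⊢
        rw [hcd, norm_one, one_mul]; exact hzj
      · have h2 := hcoef j h1 hmid
        rw [one_pow, mul_one] at h2
        have h3 : ‖f.coeff j‖ ≤ 1 := le_trans h2 (by
          rw [inv_le_one_iff₀]; right; exact hp1.le)
        calc ‖f.coeff j‖ * ‖z‖ ^ j ≤ 1 * 1 :=
              mul_le_mul h3 hzj (by positivity) zero_le_one
          _ = 1 := one_mul 1
    intro n
    induction n with
    | zero => simpa using hcrit c hc
    | succ n ih =>
      rw [Function.iterate_succ_apply']
      exact hstep _ ih
end

section
/- Let p < d with d not a power of p. Let k be the largest integer with p^k < d, let ℓ be the largest integer with p^ℓ ∣ d, and write d = a p^k + b with integers 1 ≤ a < p and 1 ≤ b < p^k. Let α ∈ K satisfy α^{d−1} = d^d / ((−a p^k)^{a p^k} b^b) and set f(z) = z^b (z − α)^{a p^k}. Then f ∈ P_d; the critical points of f are among α, (b/d)α, and 0; moreover f((b/d)α) = α, f(α) = 0, and f(0) = 0, so every critical point of f has finite forward orbit (f is post-critically finite, hence PCB); and |α| = p^{a(k−ℓ)p^k/(d−1)}. -/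
open Polynomial

/-- Let `p < d` with `d` not a power of `p`, `k` the largest integer
with `p^k < d`, `ℓ` the largest integer with `p^ℓ ∣ d`, and `d = a p^k + b` with
`1 ≤ a < p`, `1 ≤ b < p^k`. Let `α^(d-1) = d^d/((-a p^k)^(a p^k) b^b)` and
`f(z) = z^b (z-α)^(a p^k)`. Then `f ∈ P_d`; the critical points of `f` are among
`α`, `(b/d)α`, `0`; `f((b/d)α) = α`, `f(α) = 0`, `f(0) = 0`, so every critical
point has finite forward orbit (hence `f` is PCB); and `|α| = p^(a(k-ℓ)p^k/(d-1))`. -/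
theorem stmt_5 (K : Type*) [NormedField K] [IsAlgClosed K] [CompleteSpace K]
    (hna : IsNonarchimedean (fun x : K => ‖x‖))
    (p : ℕ) (hp : p.Prime)
    (hext : ∀ q : ℚ, ‖(q : K)‖ = (padicNorm p q : ℝ))
    (d : ℕ) (hpd : p < d) (hnotpow : ¬ ∃ n : ℕ, d = p ^ n)
    (k : ℕ) (hk1 : p ^ k < d) (hk2 : d ≤ p ^ (k + 1))
    (l : ℕ) (hl1 : p ^ l ∣ d) (hl2 : ¬ p ^ (l + 1) ∣ d)
    (a b : ℕ) (ha1 : 1 ≤ a) (ha2 : a < p) (hb1 : 1 ≤ b) (hb2 : b < p ^ k)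
    (hd : d = a * p ^ k + b)
    (α : K)
    (hα : α ^ (d - 1) =
      (d : K) ^ d / ((-((a : K) * (p : K) ^ k)) ^ (a * p ^ k) * (b : K) ^ b))
    (f : K[X]) (hf : f = X ^ b * (X - C α) ^ (a * p ^ k)) :
    (f.Monic ∧ f.natDegree = d ∧ f.eval 0 = 0) ∧
    (∀ c : K, f.derivative.eval c = 0 →
      c = α ∨ c = ((b : K) / (d : K)) * α ∨ c = 0) ∧
    (f.eval (((b : K) / (d : K)) * α) = α ∧ f.eval α = 0 ∧ f.eval 0 = 0) ∧
    (∀ c : K, f.derivative.eval c = 0 →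
      (Set.range fun n : ℕ => (fun z => f.eval z)^[n] c).Finite) ∧
    (∀ c : K, f.derivative.eval c = 0 →
      ∃ B : ℝ, ∀ n : ℕ, ‖(fun z => f.eval z)^[n] c‖ ≤ B) ∧
    ‖α‖ = (p : ℝ) ^ ((a : ℝ) * ((k : ℝ) - (l : ℝ)) * (p : ℝ) ^ k / ((d : ℝ) - 1)) := by
  haveI : Fact p.Prime := ⟨hp⟩
  have hp2 : 2 ≤ p := hp.two_le
  set A := a * p ^ k with hA
  have hA1 : 1 ≤ A := by
    have : 1 ≤ p ^ k := Nat.one_le_pow _ _ (by omega)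
    calc 1 ≤ 1 * 1 := by norm_num
    _ ≤ a * p ^ k := Nat.mul_le_mul ha1 this
  have hd2 : 2 ≤ d := by omega
  -- basic nonvanishing of naturals in K
  have hnormn : ∀ n : ℕ, ‖(n : K)‖ = ((padicNorm p (n : ℚ) : ℚ) : ℝ) := by
    intro n
    have := hext (n : ℚ)
    rwa [Rat.cast_natCast] at this
  have hne : ∀ n : ℕ, n ≠ 0 → (n : K) ≠ 0 := by
    intro n hn h
    have h2 := hnormn n
    rw [h, norm_zero] at h2
    have h3 : padicNorm p (n : ℚ) ≠ 0 := padicNorm.nonzero (by exact_mod_cast hn)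
    exact h3 (by exact_mod_cast h2.symm)
  have hdK : (d : K) ≠ 0 := hne d (by omega)
  have hbK : (b : K) ≠ 0 := hne b (by omega)
  have hAK : (A : K) ≠ 0 := hne A (by omega)
  have hcast : (-((a : K) * (p : K) ^ k)) = (-(A : K)) := by rw [hA]; push_cast; ring
  rw [hcast] at hα
  have hdCast : (d : K) = (A : K) + (b : K) := by rw [hd]; push_cast; ring
  -- part 1
  have hmon : f.Monic := by
    rw [hf]; exact (monic_X_pow b).mul ((monic_X_sub_C α).pow A)
  have hdeg : f.natDegree = d := by
    rw [hf, ((monic_X_pow b (R := K))).natDegree_mul ((monic_X_sub_C α).pow A),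
      natDegree_X_pow, natDegree_pow, natDegree_X_sub_C]
    omega
  have heval : ∀ x : K, f.eval x = x ^ b * (x - α) ^ A := by
    intro x; simp [hf]
  have hev0 : f.eval 0 = 0 := by
    rw [heval, zero_pow (by omega : b ≠ 0), zero_mul]
  have hevα : f.eval α = 0 := by
    rw [heval, sub_self, zero_pow (by omega : A ≠ 0), mul_zero]
  -- derivative
  have hder : ∀ c : K, f.derivative.eval c
      = c ^ (b - 1) * (c - α) ^ (A - 1) * ((d : K) * c - (b : K) * α) := by
    intro c
    obtain ⟨b', hb'⟩ : ∃ b', b = b' + 1 := ⟨b - 1, by omega⟩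
    obtain ⟨A', hA'⟩ : ∃ A', A = A' + 1 := ⟨A - 1, by omega⟩
    have hdc : (d : K) = ((b' : K) + 1) + ((A' : K) + 1) := by
      have h : d = (b' + 1) + (A' + 1) := by omega
      rw [h]; push_cast; ring
    rw [hf, hb', hA', hdc]
    simp [derivative_mul, derivative_pow, derivative_X_pow]
    push_cast
    ring
  have hcrit : ∀ c : K, f.derivative.eval c = 0 →
      c = α ∨ c = ((b : K) / (d : K)) * α ∨ c = 0 := by
    intro c hc
    rw [hder] at hc
    rcases mul_eq_zero.1 hc with h | h
    · rcases mul_eq_zero.1 h with h1 | h1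
      · exact Or.inr (Or.inr (pow_eq_zero_iff'.mp h1).1)
      · exact Or.inl (sub_eq_zero.mp (pow_eq_zero_iff'.mp h1).1)
    · refine Or.inr (Or.inl ?_)
      rw [div_mul_eq_mul_div, eq_div_iff hdK]
      linear_combination h
  -- f((b/d)α) = α
  have hevc : f.eval (((b : K) / (d : K)) * α) = α := by
    have hα' : α ^ b * α ^ A = α * ((d : K) ^ d / ((-(A : K)) ^ A * (b : K) ^ b)) := by
      rw [← pow_add, show b + A = (d - 1) + 1 from by omega, pow_succ, hα]; ring
    rw [heval]
    have h1 : ((b : K) / (d : K)) * α - α = ((-(A : K)) / (d : K)) * α := by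
      field_simp
      linear_combination (-α) * hdCast
    rw [h1, mul_pow, mul_pow,
      show ((b:K)/(d:K)) ^ b * α ^ b * (((-(A:K))/(d:K)) ^ A * α ^ A)
        = ((b:K)/(d:K)) ^ b * ((-(A:K))/(d:K)) ^ A * (α ^ b * α ^ A) from by ring,
      hα']
    have hdd : (d : K) ^ d = (d : K) ^ b * (d : K) ^ A := by
      rw [← pow_add]; congr 1; omega
    have hnA : ((-(A : K))) ^ A ≠ 0 := pow_ne_zero _ (neg_ne_zero.mpr hAK)
    rw [div_pow, div_pow, hdd]
    field_simp
  -- orbit lemma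
  have horbit : ∀ c : K, f.derivative.eval c = 0 →
      ∀ n : ℕ, (fun z => f.eval z)^[n] c = c ∨ (fun z => f.eval z)^[n] c = α ∨
        (fun z => f.eval z)^[n] c = 0 := by
    intro c hc n
    induction n with
    | zero => exact Or.inl rfl
    | succ n ih =>
      rw [Function.iterate_succ_apply']
      have step : ∀ x : K, (x = c ∨ x = α ∨ x = 0) →
          (f.eval x = c ∨ f.eval x = α ∨ f.eval x = 0) := by
        intro x hx
        rcases hx with rfl | rfl | rfl
        · rcases hcrit x hc with h | h | h
          · rw [h, hevα]; exact Or.inr (Or.inr rfl)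
          · rw [h, hevc]; exact Or.inr (Or.inl rfl)
          · rw [h, hev0]; exact Or.inr (Or.inr rfl)
        · rw [hevα]; exact Or.inr (Or.inr rfl)
        · rw [hev0]; exact Or.inr (Or.inr rfl)
      exact step _ ih
  have hfin : ∀ c : K, f.derivative.eval c = 0 →
      (Set.range fun n : ℕ => (fun z => f.eval z)^[n] c).Finite := by
    intro c hc
    apply Set.Finite.subset (((Set.finite_singleton (0:K)).insert α).insert c)
    rintro x ⟨n, rfl⟩
    rcases horbit c hc n with h | h | h <;> simp [h]
  have hbdd : ∀ c : K, f.derivative.eval c = 0 →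
      ∃ B : ℝ, ∀ n : ℕ, ‖(fun z => f.eval z)^[n] c‖ ≤ B := by
    intro c hc
    refine ⟨max ‖c‖ ‖α‖, fun n => ?_⟩
    rcases horbit c hc n with h | h | h
    · rw [h]; exact le_max_left _ _
    · rw [h]; exact le_max_right _ _
    · rw [h, norm_zero]; exact le_trans (norm_nonneg c) (le_max_left _ _)
  -- valuations
  have hlk : l < k := by
    by_contra hcon
    push_neg at hcon
    have hpk : p ^ k ∣ d := dvd_trans (pow_dvd_pow p hcon) hl1
    have hAdvd : p ^ k ∣ A := ⟨a, by rw [hA]; ring⟩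
    have hbdvd : p ^ k ∣ b := by
      have := Nat.dvd_sub hpk hAdvd
      rwa [show d - A = b from by omega] at this
    have := Nat.le_of_dvd (by omega) hbdvd
    omega
  have hAdvd : ∀ m : ℕ, m ≤ k → p ^ m ∣ A := fun m hm =>
    dvd_mul_of_dvd_right (pow_dvd_pow p hm) a
  have hvb : padicValNat p b = l := by
    have h1 : p ^ l ∣ b := by
      have := Nat.dvd_sub hl1 (hAdvd l (by omega))
      rwa [show d - A = b from by omega] at this
    have h2 : ¬ p ^ (l + 1) ∣ b := by
      intro h
      exact hl2 (hd ▸ Dvd.dvd.add (hAdvd (l+1) (by omega)) h)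
    have hb0 : b ≠ 0 := by omega
    have h3 := (padicValNat_dvd_iff_le hb0 (p := p) (n := l)).1 h1
    have h4 : ¬ (l + 1 ≤ padicValNat p b) :=
      fun h => h2 ((padicValNat_dvd_iff_le hb0 (p := p) (n := l+1)).2 h)
    omega
  have hvd : padicValNat p d = l := by
    have hd0 : d ≠ 0 := by omega
    have h3 := (padicValNat_dvd_iff_le hd0 (p := p) (n := l)).1 hl1
    have h4 : ¬ (l + 1 ≤ padicValNat p d) :=
      fun h => hl2 ((padicValNat_dvd_iff_le hd0 (p := p) (n := l+1)).2 h)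
    omega
  have hva : padicValNat p A = k := by
    rw [hA, padicValNat.mul (by omega) (by positivity),
      padicValNat.eq_zero_of_not_dvd (fun h => by have := Nat.le_of_dvd (by omega) h; omega),
      padicValNat.prime_pow]
    omega
  -- norm formula
  have hR0 : (0 : ℝ) < (p : ℝ) := by exact_mod_cast hp.pos
  have hv : ∀ n : ℕ, n ≠ 0 → ‖(n : K)‖ = (p : ℝ) ^ (-(padicValNat p n : ℝ)) := by
    intro n hn
    rw [hnormn n, padicNorm.eq_zpow_of_nonzero (by exact_mod_cast hn), padicValRat.of_nat]
    rw [show (-(padicValNat p n : ℝ)) = ((-(padicValNat p n : ℤ) : ℤ) : ℝ) from by simp,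
      Real.rpow_intCast]
    push_cast
    ring
  have hd0' : d ≠ 0 := by omega
  have hb0' : b ≠ 0 := by omega
  have hA0' : A ≠ 0 := by omega
  have hLHS : ‖α‖ ^ (d - 1) = (p : ℝ) ^ ((((k - l) * A : ℕ) : ℝ)) := by
    rw [← norm_pow, hα, norm_div, norm_mul, norm_pow, norm_pow, norm_pow, norm_neg,
      hv d hd0', hv b hb0', hv A hA0', hvd, hvb, hva,
      ← Real.rpow_natCast ((p:ℝ) ^ (-(l:ℝ))) d, ← Real.rpow_natCast ((p:ℝ) ^ (-(k:ℝ))) A,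
      ← Real.rpow_natCast ((p:ℝ) ^ (-(l:ℝ))) b,
      ← Real.rpow_mul hR0.le, ← Real.rpow_mul hR0.le, ← Real.rpow_mul hR0.le,
      ← Real.rpow_add hR0, ← Real.rpow_sub hR0]
    congr 1
    have hdr : (d : ℝ) = (A : ℝ) + (b : ℝ) := by rw [hd]; push_cast; ring
    push_cast [Nat.cast_sub hlk.le]
    linear_combination (-(l:ℝ)) * hdr
  have hfinal : ‖α‖ = (p : ℝ) ^ ((a : ℝ) * ((k : ℝ) - (l : ℝ)) * (p : ℝ) ^ k / ((d : ℝ) - 1)) := by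
    have hd1ne : (d : ℝ) - 1 ≠ 0 := by
      have : (2 : ℝ) ≤ (d : ℝ) := by exact_mod_cast hd2
      linarith
    have hRHS : ((p : ℝ) ^ ((a : ℝ) * ((k : ℝ) - (l : ℝ)) * (p : ℝ) ^ k / ((d : ℝ) - 1))) ^ (d - 1)
        = (p : ℝ) ^ ((((k - l) * A : ℕ) : ℝ)) := by
      rw [← Real.rpow_natCast ((p:ℝ) ^ ((a : ℝ) * ((k : ℝ) - (l : ℝ)) * (p : ℝ) ^ k / ((d : ℝ) - 1))) (d-1),
        ← Real.rpow_mul hR0.le]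
      congr 1
      have hcd : ((d - 1 : ℕ) : ℝ) = (d : ℝ) - 1 := by
        push_cast [Nat.cast_sub (show 1 ≤ d from by omega)]; ring
      rw [hcd, div_mul_cancel₀ _ hd1ne]
      push_cast [Nat.cast_sub hlk.le, hA]
      ring
    exact (pow_left_inj₀ (norm_nonneg _) (Real.rpow_nonneg hR0.le _)
      (show d - 1 ≠ 0 from by omega)).1 (by rw [hLHS, hRHS])
  exact ⟨⟨hmon, hdeg, hev0⟩, hcrit, ⟨hevc, hevα, hev0⟩, hfin, hbdd, hfinal⟩
end

section
/- Let p be a prime, d = p^k with k ≥ 1, and f ∈ P_d. Let c be a critical point of f of maximal absolute value among all critical points, and suppose |c| > 1. Then every root z of f satisfies |z| < |c|; consequently |fⁿ(c)| = |c|^{dⁿ} for all n ≥ 1, so the forward orbit of c under f is unbounded. -/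
open Polynomial

section stmt9aux
variable {K : Type*} [NormedField K]

private lemma stmt9_na_multiset_sum (hna : IsNonarchimedean (fun x : K => ‖x‖)) (M : ℝ)
    (hM : 0 ≤ M) : ∀ (s : Multiset K), (∀ x ∈ s, ‖x‖ ≤ M) → ‖s.sum‖ ≤ M := by
  intro s
  induction s using Multiset.induction with
  | empty => intro _; simpa using hM
  | cons a t ih =>
    intro h
    rw [Multiset.sum_cons]
    refine le_trans (hna a t.sum) (max_le (h a (Multiset.mem_cons_self a t)) ?_)
    exact ih fun x hx => h x (Multiset.mem_cons_of_mem hx)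

private lemma stmt9_na_finset_sum (hna : IsNonarchimedean (fun x : K => ‖x‖)) (M : ℝ)
    (hM : 0 ≤ M) (n : ℕ) (g : ℕ → K) (h : ∀ i < n, ‖g i‖ ≤ M) :
    ‖∑ i ∈ Finset.range n, g i‖ ≤ M := by
  induction n with
  | zero => simpa using hM
  | succ m ih =>
    rw [Finset.sum_range_succ]
    refine le_trans (hna _ _) (max_le (ih fun i hi => h i (hi.trans (Nat.lt_succ_self m))) ?_)
    · exact h m (Nat.lt_succ_self m)

private lemma stmt9_multiset_prod_norm_le (M : ℝ) (hM : 0 ≤ M) :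
    ∀ (s : Multiset K), (∀ x ∈ s, ‖x‖ ≤ M) → ‖s.prod‖ ≤ M ^ Multiset.card s := by
  intro s
  induction s using Multiset.induction with
  | empty => intro _; simp
  | cons a t ih =>
    intro h
    rw [Multiset.prod_cons, Multiset.card_cons, pow_succ, norm_mul, mul_comm]
    exact mul_le_mul (ih fun x hx => h x (Multiset.mem_cons_of_mem hx))
      (h a (Multiset.mem_cons_self a t)) (norm_nonneg a) (pow_nonneg hM _)

private lemma stmt9_esymm_norm_le (hna : IsNonarchimedean (fun x : K => ‖x‖)) (M : ℝ)
    (hM : 0 ≤ M) (s : Multiset K) (h : ∀ x ∈ s, ‖x‖ ≤ M) (n : ℕ) :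
    ‖s.esymm n‖ ≤ M ^ n := by
  refine stmt9_na_multiset_sum hna _ (pow_nonneg hM n) _ ?_
  intro x hx
  rw [Multiset.mem_map] at hx
  obtain ⟨t, ht, rfl⟩ := hx
  rw [Multiset.mem_powersetCard] at ht
  have := stmt9_multiset_prod_norm_le M hM t (fun y hy => h y (Multiset.mem_of_le ht.1 hy))
  rwa [ht.2] at this

end stmt9aux

/-- Let `p` be a prime, `d = p^k` with `k ≥ 1`, and `f ∈ P_d`. Let `c`
be a critical point of `f` of maximal absolute value and suppose `|c| > 1`. Then
every root `z` of `f` satisfies `|z| < |c|`; consequently `|fⁿ(c)| = |c|^(dⁿ)` for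
all `n ≥ 1`, so the forward orbit of `c` is unbounded. -/
theorem stmt_9 (K : Type*) [NormedField K] [IsAlgClosed K] [CompleteSpace K]
    (hna : IsNonarchimedean (fun x : K => ‖x‖))
    (p : ℕ) (hp : p.Prime)
    (hext : ∀ q : ℚ, ‖(q : K)‖ = (padicNorm p q : ℝ))
    (k : ℕ) (hk : 1 ≤ k) (d : ℕ) (hd : d = p ^ k)
    (f : K[X]) (hmonic : f.Monic) (hdeg : f.natDegree = d) (hf0 : f.eval 0 = 0)
    (c : K) (hc : f.derivative.eval c = 0)
    (hmax : ∀ c' : K, f.derivative.eval c' = 0 → ‖c'‖ ≤ ‖c‖)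
    (hbig : 1 < ‖c‖) :
    (∀ z : K, f.eval z = 0 → ‖z‖ < ‖c‖) ∧
    (∀ n : ℕ, 1 ≤ n → ‖(fun z => f.eval z)^[n] c‖ = ‖c‖ ^ (d ^ n)) ∧
    ¬ ∃ B : ℝ, ∀ n : ℕ, ‖(fun z => f.eval z)^[n] c‖ ≤ B := by
  have hp1 : 1 < p := hp.one_lt
  have hpR : (1:ℝ) < p := by exact_mod_cast hp1
  have hpR0 : (0:ℝ) < p := lt_trans one_pos hpR
  have hd2 : 2 ≤ d := by
    rw [hd]
    calc 2 ≤ p := hp.two_le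
    _ = p ^ 1 := (pow_one p).symm
    _ ≤ p ^ k := Nat.pow_le_pow_right hp.pos hk
  have hc0 : (0:ℝ) < ‖c‖ := lt_trans one_pos hbig
  -- norm of natural numbers
  have hnormnat : ∀ i : ℕ, ‖(i : K)‖ = (padicNorm p i : ℝ) := by
    intro i
    have := hext (i : ℚ)
    push_cast at this
    exact this
  -- norm of d
  have hnormd : ‖(d : K)‖ = (p : ℝ) ^ (-(k:ℤ)) := by
    rw [hnormnat d, hd]
    have h0 : ((p:ℚ))^k ≠ 0 := pow_ne_zero _ (by exact_mod_cast hp.ne_zero)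
    rw [show ((p^k : ℕ) : ℚ) = (p:ℚ)^k by push_cast; ring]
    rw [padicNorm.eq_zpow_of_nonzero h0]
    have : padicValRat p ((p:ℚ)^k) = k := by
      rw [show ((p:ℚ)^k) = ((p^k : ℕ) : ℚ) by push_cast; ring, padicValRat.of_nat]
      haveI : Fact p.Prime := ⟨hp⟩
      rw [padicValNat.prime_pow]
    rw [this]
    push_cast
    ring_nf
  -- lower bound on the norm of small naturals
  have hnormi : ∀ i : ℕ, 1 ≤ i → i < d → (p:ℝ) ^ ((1:ℤ) - k) ≤ ‖(i : K)‖ := by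
    intro i hi1 hid
    have hi0 : i ≠ 0 := Nat.one_le_iff_ne_zero.mp hi1
    have hval : padicValNat p i ≤ k - 1 := by
      by_contra h
      push_neg at h
      have hk' : k ≤ padicValNat p i := by omega
      have h1 : p ^ k ∣ i := dvd_trans (pow_dvd_pow p hk') pow_padicValNat_dvd
      have := Nat.le_of_dvd (Nat.pos_of_ne_zero hi0) h1
      omega
    rw [hnormnat i]
    have hq0 : ((i:ℚ)) ≠ 0 := by exact_mod_cast hi0
    rw [show ((i:ℕ):ℚ) = ((i:ℚ)) from rfl, padicNorm.eq_zpow_of_nonzero hq0,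
      padicValRat.of_nat]
    rw [show ((((p:ℚ)) ^ (-(padicValNat p i : ℤ)) : ℚ) : ℝ) = (p:ℝ) ^ (-(padicValNat p i : ℤ)) by
      push_cast; ring]
    apply zpow_le_zpow_right₀ (le_of_lt hpR)
    omega
  -- d ≠ 0 in K
  have hdK : (d : K) ≠ 0 := by
    intro h
    rw [h, norm_zero] at hnormd
    exact absurd hnormd.symm (ne_of_gt (zpow_pos hpR0 _))
  -- derivative facts
  have hco : f.derivative.coeff (d - 1) = (d : K) := by
    rw [coeff_derivative]
    have h1 : d - 1 + 1 = d := by omega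
    rw [h1, show f.coeff d = 1 from by rw [← hdeg]; exact hmonic.coeff_natDegree]
    have h2 : ((d - 1 : ℕ) : K) + 1 = (d : K) := by
      exact_mod_cast congrArg (Nat.cast : ℕ → K) h1
    rw [one_mul, h2]
  have hndle : f.derivative.natDegree ≤ d - 1 := by
    have h := natDegree_derivative_le f
    omega
  have hnd : f.derivative.natDegree = d - 1 :=
    le_antisymm hndle (le_natDegree_of_ne_zero (hco ▸ hdK))
  have hlead : f.derivative.leadingCoeff = (d : K) := by
    rw [leadingCoeff, hnd, hco]
  have hfd0 : f.derivative ≠ 0 := fun h => hdK (by rw [← hco, h, coeff_zero])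
  have hcardd : Multiset.card f.derivative.roots = f.derivative.natDegree :=
    (splits_iff_card_roots).mp (IsAlgClosed.splits f.derivative)
  -- KEY: coefficient bounds for f
  have hcoef : ∀ i : ℕ, 1 ≤ i → i < d → ‖f.coeff i‖ ≤ (p:ℝ)⁻¹ * ‖c‖ ^ (d - i) := by
    intro i hi1 hid
    have him : i - 1 ≤ f.derivative.natDegree := by omega
    have hvieta := Polynomial.coeff_eq_esymm_roots_of_card hcardd him
    have hrb : ∀ x ∈ f.derivative.roots, ‖x‖ ≤ ‖c‖ := by
      intro x hx
      exact hmax x ((mem_roots hfd0).mp hx)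
    have hesym : ‖f.derivative.roots.esymm (f.derivative.natDegree - (i-1))‖
        ≤ ‖c‖ ^ (d - i) := by
      rw [hnd, show d - 1 - (i - 1) = d - i by omega]
      exact stmt9_esymm_norm_le hna ‖c‖ (le_of_lt hc0) f.derivative.roots hrb (d - i)
    have hkey : ‖f.derivative.coeff (i-1)‖ ≤ (p:ℝ) ^ (-(k:ℤ)) * ‖c‖ ^ (d - i) := by
      rw [hvieta, hlead]
      rw [norm_mul, norm_mul, norm_pow, norm_neg, norm_one, one_pow, mul_one, hnormd]
      exact mul_le_mul_of_nonneg_left hesym (le_of_lt (zpow_pos hpR0 _))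
    have hrel : f.derivative.coeff (i-1) = f.coeff i * (i : K) := by
      rw [coeff_derivative, show i - 1 + 1 = i by omega]
      congr 1
      exact_mod_cast congrArg (Nat.cast : ℕ → K) (show i - 1 + 1 = i by omega)
    have hiK : (p:ℝ) ^ ((1:ℤ) - k) ≤ ‖(i : K)‖ := hnormi i hi1 hid
    have hiK0 : (0:ℝ) < ‖(i:K)‖ := lt_of_lt_of_le (zpow_pos hpR0 _) hiK
    have hmain : ‖f.coeff i‖ * ‖(i:K)‖ ≤ (p:ℝ) ^ (-(k:ℤ)) * ‖c‖ ^ (d - i) := by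
      rw [← norm_mul, ← hrel]; exact hkey
    calc ‖f.coeff i‖ = (‖f.coeff i‖ * ‖(i:K)‖) / ‖(i:K)‖ := by field_simp
      _ ≤ ((p:ℝ) ^ (-(k:ℤ)) * ‖c‖ ^ (d - i)) / ((p:ℝ) ^ ((1:ℤ) - k)) := by
          gcongr
      _ = (p:ℝ)⁻¹ * ‖c‖ ^ (d - i) := by
          rw [mul_comm ((p:ℝ) ^ (-(k:ℤ))) _, mul_div_assoc, ← zpow_sub₀ (ne_of_gt hpR0)]
          rw [show (-(k:ℤ)) - ((1:ℤ) - k) = -1 by ring, zpow_neg_one, mul_comm]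
  -- PART 1: every root of f is strictly smaller than c in norm
  have hroots : ∀ z : K, f.eval z = 0 → ‖z‖ < ‖c‖ := by
    intro z hz
    by_contra hcon
    push_neg at hcon
    have hz1 : 1 < ‖z‖ := lt_of_lt_of_le hbig hcon
    have hz0 : (0:ℝ) < ‖z‖ := lt_trans one_pos hz1
    have heval : f.eval z = ∑ i ∈ Finset.range (d + 1), f.coeff i * z ^ i := by
      rw [eval_eq_sum_range, hdeg]
    rw [Finset.sum_range_succ] at heval
    have hcd : f.coeff d = 1 := by rw [← hdeg]; exact hmonic.coeff_natDegree
    rw [hcd, one_mul] at heval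
    have hzd : z ^ d = - ∑ i ∈ Finset.range d, f.coeff i * z ^ i := by
      rw [hz] at heval
      linear_combination -heval
    have hbound : ‖z ^ d‖ ≤ (p:ℝ)⁻¹ * ‖z‖ ^ d := by
      rw [hzd, norm_neg]
      apply stmt9_na_finset_sum hna _ (by positivity) d
      intro i hi
      rcases Nat.eq_zero_or_pos i with rfl | hi1
      · have hc0' : f.coeff 0 = 0 := by rw [coeff_zero_eq_eval_zero]; exact hf0
        rw [hc0', zero_mul, norm_zero]
        positivity
      · rw [norm_mul, norm_pow]
        calc ‖f.coeff i‖ * ‖z‖ ^ i ≤ ((p:ℝ)⁻¹ * ‖c‖ ^ (d - i)) * ‖z‖ ^ i := by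
              apply mul_le_mul_of_nonneg_right (hcoef i hi1 hi) (by positivity)
          _ ≤ ((p:ℝ)⁻¹ * ‖z‖ ^ (d - i)) * ‖z‖ ^ i := by
              gcongr
          _ = (p:ℝ)⁻¹ * ‖z‖ ^ d := by
              rw [mul_assoc, ← pow_add, Nat.sub_add_cancel (le_of_lt hi)]
    rw [norm_pow] at hbound
    have hlt : (p:ℝ)⁻¹ * ‖z‖ ^ d < 1 * ‖z‖ ^ d := by
      apply mul_lt_mul_of_pos_right _ (pow_pos hz0 d)
      rw [inv_lt_one_iff₀]; right; exact hpR
    rw [one_mul] at hlt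
    exact absurd (lt_of_le_of_lt hbound hlt) (lt_irrefl _)
  -- PART 2 and 3
  have hf0' : f ≠ 0 := hmonic.ne_zero
  have hcard : Multiset.card f.roots = d := by
    rw [← hdeg]; exact (splits_iff_card_roots).mp (IsAlgClosed.splits f)
  have hfact : f = (f.roots.map fun a => X - C a).prod :=
    (IsAlgClosed.splits f).eq_prod_roots_of_monic hmonic
  have hsub : ∀ a b : K, ‖b‖ < ‖a‖ → ‖a - b‖ = ‖a‖ := by
    intro a b h
    apply le_antisymm
    · have h' : ‖a - b‖ ≤ max ‖a‖ ‖(-b)‖ := by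
        simpa [sub_eq_add_neg] using hna a (-b)
      rw [norm_neg] at h'
      exact h'.trans_eq (max_eq_left (le_of_lt h))
    · by_contra hcon
      push_neg at hcon
      have : ‖a‖ ≤ max ‖a - b‖ ‖b‖ := by
        simpa using hna (a - b) b
      rcases max_cases ‖a - b‖ ‖b‖ with ⟨he, _⟩ | ⟨he, _⟩ <;> rw [he] at this
      · exact absurd (lt_of_le_of_lt this hcon) (lt_irrefl _)
      · exact absurd (lt_of_le_of_lt this h) (lt_irrefl _)
  have norm_ms_prod : ∀ s : Multiset K, ‖s.prod‖ = (s.map fun y => ‖y‖).prod := by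
    intro s
    induction s using Multiset.induction with
    | empty => simp
    | cons a t ih => simp [norm_mul, ih]
  have hevalK : ∀ x : K, ‖c‖ ≤ ‖x‖ → ‖f.eval x‖ = ‖x‖ ^ d := by
    intro x hx
    conv_lhs => rw [hfact]
    rw [eval_multiset_prod, Multiset.map_map, norm_ms_prod, Multiset.map_map]
    have key : ∀ r ∈ f.roots, ((fun y => ‖y‖) ∘ (eval x) ∘ fun a => X - C a) r = ‖x‖ := by
      intro r hr
      have hr0 : f.eval r = 0 := (mem_roots hf0').mp hr
      simp only [Function.comp_apply, eval_sub, eval_X, eval_C]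
      exact hsub x r (lt_of_lt_of_le (hroots r hr0) hx)
    rw [Multiset.map_congr rfl key, Multiset.map_const', Multiset.prod_replicate, hcard]
  have hiter : ∀ n : ℕ, ‖(fun z => f.eval z)^[n] c‖ = ‖c‖ ^ (d ^ n) := by
    intro n
    induction n with
    | zero => simp
    | succ m ih =>
      rw [Function.iterate_succ_apply']
      have hge : ‖c‖ ≤ ‖(fun z => f.eval z)^[m] c‖ := by
        rw [ih]
        exact le_self_pow₀ (le_of_lt hbig) (pow_ne_zero m (by omega : d ≠ 0))
      rw [hevalK _ hge, ih, ← pow_mul, ← pow_succ]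
  refine ⟨hroots, fun n _ => hiter n, ?_⟩
  rintro ⟨B, hB⟩
  obtain ⟨n, hn⟩ := pow_unbounded_of_one_lt B hbig
  have h1 : ‖c‖ ^ n ≤ ‖c‖ ^ (d ^ n) := by
    apply pow_le_pow_right₀ (le_of_lt hbig)
    exact le_of_lt (Nat.lt_pow_self (n := n) (by omega))
  have h2 := hB n
  rw [hiter n] at h2
  linarith
end

section
/- Let p be a prime with p > d/2, let f ∈ P_d be post-critically bounded, and let c₁ be a critical point of f of maximal absolute value with |c₁| > 1. Then there exists a fixed point α of f (i.e. f(α) = α) with |c₁ − α| ≤ 1. -/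
open Polynomial

private lemma norm_multiset_prod' {K : Type*} [NormedField K] (m : Multiset K) :
    ‖m.prod‖ = (m.map fun x => ‖x‖).prod := by
  induction m using Multiset.induction with
  | empty => simp
  | cons a s ih => simp [Multiset.prod_cons, norm_mul, ih]

/-- Let `p` be a prime with `p > d/2`, let `f ∈ P_d` be
post-critically bounded, and let `c₁` be a critical point of maximal absolute value
with `|c₁| > 1`. Then there is a fixed point `α` of `f` with `|c₁ - α| ≤ 1`. -/
theorem stmt_10 (K : Type*) [NormedField K] [IsAlgClosed K] [CompleteSpace K]
    (hna : IsNonarchimedean (fun x : K => ‖x‖))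
    (p : ℕ) (hp : p.Prime)
    (hext : ∀ q : ℚ, ‖(q : K)‖ = (padicNorm p q : ℝ))
    (d : ℕ) (hdp : d < 2 * p)
    (f : K[X]) (hmonic : f.Monic) (hdeg : f.natDegree = d) (hf0 : f.eval 0 = 0)
    (hPCB : ∀ c : K, f.derivative.eval c = 0 →
      ∃ B : ℝ, ∀ n : ℕ, ‖(fun z => f.eval z)^[n] c‖ ≤ B)
    (c₁ : K) (hc₁ : f.derivative.eval c₁ = 0)
    (hmax : ∀ c : K, f.derivative.eval c = 0 → ‖c‖ ≤ ‖c₁‖)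
    (hbig : 1 < ‖c₁‖) :
    ∃ α : K, f.eval α = α ∧ ‖c₁ - α‖ ≤ 1 := by
  classical
  by_contra hcon
  push_neg at hcon
  -- key nonarchimedean fact: the larger term wins
  have key : ∀ x y : K, ‖y‖ < ‖x‖ → ‖x + y‖ = ‖x‖ := by
    intro x y hxy
    apply le_antisymm
    · exact le_trans (hna x y) (by simp [max_le_iff, le_of_lt hxy])
    · have : ‖x‖ ≤ max ‖x + y‖ ‖y‖ := by
        have := hna (x + y) (-y)
        simpa using this
      rcases max_cases ‖x + y‖ ‖y‖ with ⟨h1, _⟩ | ⟨h1, _⟩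
      · rwa [h1] at this
      · rw [h1] at this; exact absurd (lt_of_le_of_lt this hxy) (lt_irrefl _)
  -- d ≥ 2
  have hd2 : 2 ≤ d := by
    by_contra hd
    interval_cases d
    · have h1 : f = 1 := hmonic.natDegree_eq_zero.mp hdeg
      rw [h1] at hf0; simp at hf0
    · have h1 : f = X + C (f.coeff 0) := hmonic.eq_X_add_C hdeg
      have h0 : f.coeff 0 = 0 := by rw [coeff_zero_eq_eval_zero, hf0]
      rw [h0, map_zero, add_zero] at h1
      rw [h1] at hc₁
      simp at hc₁
  set g : K[X] := f - X with hg
  have hdegf : f.degree = (d : ℕ) := by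
    rw [Polynomial.degree_eq_natDegree hmonic.ne_zero, hdeg]
  have hdegX : (X : K[X]).degree < f.degree := by
    rw [degree_X, hdegf]; exact_mod_cast by omega
  have hgm : g.Monic := hmonic.sub_of_left hdegX
  have hgd : g.natDegree = d := by
    have := Polynomial.degree_sub_eq_left_of_degree_lt hdegX
    rw [← hdeg]
    exact natDegree_eq_of_degree_eq this
  have hsplits : g.Splits := IsAlgClosed.splits g
  set r : Multiset K := g.roots with hr
  have hcard : r.card = d := by rw [← hgd]; exact (splits_iff_card_roots.mp hsplits)
  have hprod : g = (r.map fun a => X - C a).prod :=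
    hsplits.eq_prod_roots_of_monic hgm
  have hgeval : ∀ z : K, g.eval z = f.eval z - z := by intro z; simp [hg]
  have hfix : ∀ a ∈ r, f.eval a = a := by
    intro a ha
    have : g.eval a = 0 := (Polynomial.mem_roots'.mp ha).2
    rw [hgeval] at this; exact sub_eq_zero.mp this
  have hgt : ∀ a ∈ r, 1 < ‖c₁ - a‖ := fun a ha => hcon a (hfix a ha)
  have h0r : (0 : K) ∈ r := by
    rw [hr, Polynomial.mem_roots']
    exact ⟨hgm.ne_zero, by rw [IsRoot, hgeval]; simp [hf0]⟩
  have hevalnorm : ∀ z : K, ‖g.eval z‖ = (r.map fun a => ‖z - a‖).prod := by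
    intro z
    conv_lhs => rw [hprod]
    rw [eval_multiset_prod, Multiset.map_map, norm_multiset_prod', Multiset.map_map]
    congr 1
    apply Multiset.map_congr rfl
    intro a _; simp [Function.comp]
  -- escape step
  have hstep : ∀ z : K, 1 < ‖z‖ → (∀ a ∈ r, ‖a‖ < ‖z‖) → ‖f.eval z‖ = ‖z‖ ^ d := by
    intro z hz1 hza
    have hzd : ‖g.eval z‖ = ‖z‖ ^ d := by
      rw [hevalnorm z]
      have hmapeq : (r.map fun a => ‖z - a‖) = r.map fun _ => ‖z‖ := by
        apply Multiset.map_congr rfl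
        intro a ha
        have := hza a ha
        have h1 : ‖z - a‖ = ‖z + -a‖ := by ring_nf
        rw [h1, key z (-a) (by simpa using this)]
      rw [hmapeq, Multiset.map_const', Multiset.prod_replicate, hcard]
    have hlt : ‖z‖ < ‖g.eval z‖ := by
      rw [hzd]
      calc ‖z‖ = ‖z‖ ^ 1 := (pow_one _).symm
        _ < ‖z‖ ^ d := by
          apply pow_lt_pow_right₀ hz1; omega
    have : f.eval z = g.eval z + z := by rw [hgeval]; ring
    rw [this, key _ _ hlt, hzd]
  -- Claim A: |g(c₁)| exceeds 1, ‖c₁‖, and all root norms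
  set P : ℝ := ‖g.eval c₁‖ with hP
  have hone_le : ∀ s : Multiset K, (∀ x ∈ s, x ∈ r) →
      (1 : ℝ) ≤ (s.map fun a => ‖c₁ - a‖).prod := by
    intro s hs
    apply Multiset.one_le_prod
    intro x hx
    obtain ⟨a, ha, rfl⟩ := Multiset.mem_map.mp hx
    exact le_of_lt (hgt a (hs a ha))
  set t : Multiset K := r.erase 0 with ht
  have hrt : (0 : K) ::ₘ t = r := Multiset.cons_erase h0r
  have htmem : ∀ x ∈ t, x ∈ r := fun x hx => Multiset.mem_of_mem_erase (by rwa [ht] at hx)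
  have htcard : t.card = d - 1 := by
    have := Multiset.card_erase_of_mem h0r
    rw [← ht] at this; rw [this, hcard]; rfl
  have htne : t ≠ 0 := by
    intro h0
    rw [h0] at htcard; simp at htcard; omega
  obtain ⟨b, hb⟩ := Multiset.exists_mem_of_ne_zero htne
  have hPsplit : P = ‖c₁‖ * (t.map fun a => ‖c₁ - a‖).prod := by
    rw [hP, hevalnorm, ← hrt]; simp
  have hQ1 : 1 < (t.map fun a => ‖c₁ - a‖).prod := by
    have hbt : b ::ₘ t.erase b = t := Multiset.cons_erase hb
    rw [← hbt]
    rw [Multiset.map_cons, Multiset.prod_cons]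
    have h1 : 1 < ‖c₁ - b‖ := hgt b (htmem b hb)
    have h2 : (1:ℝ) ≤ ((t.erase b).map fun a => ‖c₁ - a‖).prod :=
      hone_le _ (fun x hx => htmem x (Multiset.mem_of_mem_erase hx))
    calc (1:ℝ) < ‖c₁ - b‖ := h1
      _ = ‖c₁ - b‖ * 1 := (mul_one _).symm
      _ ≤ _ := by
        apply mul_le_mul_of_nonneg_left h2 (by positivity)
  have hPc : ‖c₁‖ < P := by
    rw [hPsplit]
    calc ‖c₁‖ = ‖c₁‖ * 1 := (mul_one _).symm
      _ < _ := by
        apply mul_lt_mul_of_pos_left hQ1 (by positivity)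
  have hP1 : 1 < P := lt_trans hbig hPc
  have hProots : ∀ a ∈ r, ‖a‖ < P := by
    intro a ha
    by_cases ha0 : a = 0
    · rw [ha0]; simp; linarith
    · have hat : a ∈ t := (Multiset.mem_erase_of_ne ha0).mpr ha
      have hata : a ::ₘ t.erase a = t := Multiset.cons_erase hat
      have hPsplit2 : P = ‖c₁‖ * (‖c₁ - a‖ * ((t.erase a).map fun x => ‖c₁ - x‖).prod) := by
        have hq : (Multiset.map (fun x => ‖c₁ - x‖) t).prod
            = ‖c₁ - a‖ * ((t.erase a).map fun x => ‖c₁ - x‖).prod := by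
          conv_lhs => rw [← hata]
          rw [Multiset.map_cons, Multiset.prod_cons]
        rw [hPsplit, hq]
      have hrest : (1:ℝ) ≤ ((t.erase a).map fun x => ‖c₁ - x‖).prod :=
        hone_le _ (fun x hx => htmem x (Multiset.mem_of_mem_erase hx))
      have h1a : 1 < ‖c₁ - a‖ := hgt a ha
      have hamax : ‖a‖ ≤ max ‖c₁‖ ‖c₁ - a‖ := by
        have h2 := hna c₁ (-(c₁ - a))
        simp only [norm_neg] at h2
        have : c₁ + -(c₁ - a) = a := by ring
        rw [this] at h2; exact h2
      have hmaxlt : max ‖c₁‖ ‖c₁ - a‖ < ‖c₁‖ * ‖c₁ - a‖ := by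
        rcases max_cases ‖c₁‖ ‖c₁ - a‖ with ⟨h1, _⟩ | ⟨h1, _⟩ <;> rw [h1] <;> nlinarith
      have : ‖c₁‖ * ‖c₁ - a‖ ≤ P := by
        rw [hPsplit2, ← mul_assoc]
        nlinarith [norm_nonneg c₁, norm_nonneg (c₁ - a)]
      linarith
  -- set up escape
  set w : K := f.eval c₁ with hw
  have hwP : ‖w‖ = P := by
    have : w = g.eval c₁ + c₁ := by rw [hgeval]; ring
    rw [this, key _ _ hPc]
  have hw1 : 1 < ‖w‖ := by rw [hwP]; exact hP1
  have hwroots : ∀ a ∈ r, ‖a‖ < ‖w‖ := by rw [hwP]; exact hProots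
  have hiter : ∀ n : ℕ, (∀ a ∈ r, ‖a‖ < ‖(fun z => f.eval z)^[n] w‖) ∧
      1 < ‖(fun z => f.eval z)^[n] w‖ ∧ ‖w‖ ^ (n + 1) ≤ ‖(fun z => f.eval z)^[n] w‖ := by
    intro n
    induction n with
    | zero => exact ⟨by simpa using hwroots, by simpa using hw1, by simp⟩
    | succ n ih =>
      obtain ⟨ihr, ih1, ihp⟩ := ih
      set z : K := (fun z => f.eval z)^[n] w with hz
      have hsucc : (fun z => f.eval z)^[n + 1] w = f.eval z := by
        rw [Function.iterate_succ_apply']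
      have hfz : ‖f.eval z‖ = ‖z‖ ^ d := hstep z ih1 ihr
      have hzz : ‖z‖ ≤ ‖z‖ ^ d := le_self_pow₀ (le_of_lt ih1) (by omega)
      have hwz : ‖w‖ ≤ ‖z‖ := le_trans (le_self_pow₀ (le_of_lt hw1) (by omega)) ihp
      refine ⟨?_, ?_, ?_⟩
      · intro a ha; rw [hsucc, hfz]; exact lt_of_lt_of_le (ihr a ha) hzz
      · rw [hsucc, hfz]; exact lt_of_lt_of_le ih1 hzz
      · rw [hsucc, hfz]
        calc ‖w‖ ^ (n + 2) = ‖w‖ ^ (n + 1) * ‖w‖ := by ring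
          _ ≤ ‖z‖ * ‖z‖ := by
            apply mul_le_mul ihp hwz (by positivity) (by positivity)
          _ = ‖z‖ ^ 2 := by ring
          _ ≤ ‖z‖ ^ d := pow_le_pow_right₀ (le_of_lt ih1) hd2
  obtain ⟨B, hB⟩ := hPCB c₁ hc₁
  obtain ⟨n, hn⟩ := pow_unbounded_of_one_lt B hw1
  have h1 : ‖w‖ ^ (n + 1) ≤ ‖(fun z => f.eval z)^[n] w‖ := (hiter n).2.2
  have h2 : (fun z => f.eval z)^[n] w = (fun z => f.eval z)^[n + 1] c₁ := by
    rw [Function.iterate_succ_apply]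
  have h3 : ‖w‖ ^ n ≤ ‖w‖ ^ (n + 1) :=
    pow_le_pow_right₀ (le_of_lt hw1) (by omega)
  have h4 := hB (n + 1)
  rw [h2] at h1
  linarith
end
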